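/- arXiv:2312.00205 — 2 statements merged into one kernel-verified Lean document; each statement's English description precedes it below -/
import Mathlib

section
/- Let J be an ideal on ω and (I_n)_{n∈ω} be a sequence of analytic ideals on ω. Then ∑^J_{n∈ω} I_n is Egorov if and only if J is Egorov and {n ∈ ω : I_n is not Egorov} ∈ J. -/
open MeasureTheory Set


open scoped ENNReal NNReal

namespace EgorovAux

lemma sum_inv_pow_le_one : ∀ i : ℕ, (∑ j ∈ Finset.range i, ((2:ℝ≥0∞)⁻¹)^(j+1)) ≤ 1 := by
  have key : ∀ i : ℕ, (∑ j ∈ Finset.range i, ((2:ℝ≥0∞)⁻¹)^(j+1)) + (2:ℝ≥0∞)⁻¹^i = 1 := by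
    intro i
    induction i with
    | zero => simp
    | succ n ih =>
      rw [Finset.sum_range_succ, add_assoc]
      have : ((2:ℝ≥0∞)⁻¹)^(n+1) + (2:ℝ≥0∞)⁻¹^(n+1) = (2:ℝ≥0∞)⁻¹^n := by
        rw [pow_succ, ← mul_add, ENNReal.inv_two_add_inv_two, mul_one]
      rw [this, ih]
  intro i
  calc (∑ j ∈ Finset.range i, ((2:ℝ≥0∞)⁻¹)^(j+1))
      ≤ (∑ j ∈ Finset.range i, ((2:ℝ≥0∞)⁻¹)^(j+1)) + (2:ℝ≥0∞)⁻¹^i := le_self_add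
    _ = 1 := key i

variable {α : Type*} [TopologicalSpace α] [PolishSpace α] [MeasurableSpace α] [BorelSpace α]

/-- Inner approximation of an analytic set by compact sets, w.r.t. a finite measure. -/
theorem analyticSet_exists_isCompact_le (μ : Measure α) [IsFiniteMeasure μ] {A : Set α}
    (hA : AnalyticSet A) {ε : ℝ≥0∞} (hε : 0 < ε) (hε' : ε ≠ ∞) :
    ∃ K : Set α, IsCompact K ∧ K ⊆ A ∧ μ A ≤ μ K + ε := by
  rw [AnalyticSet] at hA
  rcases hA with hA | ⟨f, fcont, frange⟩
  · exact ⟨∅, isCompact_empty, by simp [hA], by simp [hA]⟩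
  -- basic sets
  set B : List ℕ → Set (ℕ → ℕ) := fun l => {x | ∀ i : Fin l.length, x i ≤ l.get i} with hB
  have hBnil : B [] = univ := by ext x; simp [hB]
  have hBapp : ∀ (l : List ℕ) (m : ℕ),
      B (l ++ [m]) = B l ∩ {x | x l.length ≤ m} := by
    intro l m
    ext x
    constructor
    · intro hx
      constructor
      · intro i
        have := hx ⟨i, by simp [List.length_append]⟩
        simpa [List.getElem_append, i.isLt] using this
      · have := hx ⟨l.length, by simp⟩
        simpa using this
    · rintro ⟨h1, h2⟩ i
      rcases lt_or_ge (i : ℕ) l.length with h | h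
      · have := h1 ⟨i, h⟩
        simpa [List.getElem_append, h] using this
      · have : (i : ℕ) = l.length := by
          have := i.isLt; simp [List.length_append] at this; omega
        simp [List.getElem_append, this]
        simpa [this] using h2
  have hBunion : ∀ l : List ℕ, (⋃ m : ℕ, B (l ++ [m])) = B l := by
    intro l
    ext x
    simp only [mem_iUnion, hBapp]
    constructor
    · rintro ⟨m, hm, _⟩; exact hm
    · intro hx; exact ⟨x l.length, hx, show x l.length ≤ x l.length from le_rfl⟩
  -- the step choice
  have step_ex : ∀ l : List ℕ, ∃ m : ℕ,
      μ (f '' B l) ≤ μ (f '' B (l ++ [m])) + ε * (2:ℝ≥0∞)⁻¹^(l.length + 1) := by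
    intro l
    have hmono : Monotone fun m : ℕ => f '' B (l ++ [m]) := by
      intro m m' hmm
      apply image_mono
      rw [hBapp, hBapp]
      exact inter_subset_inter_right _ (fun x hx => le_trans hx hmm)
    have hU : μ (⋃ m : ℕ, f '' B (l ++ [m])) = ⨆ m : ℕ, μ (f '' B (l ++ [m])) :=
      hmono.measure_iUnion
    have himg : (⋃ m : ℕ, f '' B (l ++ [m])) = f '' B l := by
      rw [← image_iUnion, hBunion]
    rw [himg] at hU
    have hpos : 0 < ε * (2:ℝ≥0∞)⁻¹^(l.length + 1) := by
      apply ENNReal.mul_pos hε.ne'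
      simp [pow_eq_zero_iff]
    by_contra hcon
    push_neg at hcon
    have : (⨆ m : ℕ, μ (f '' B (l ++ [m]))) + ε * (2:ℝ≥0∞)⁻¹^(l.length + 1)
        < μ (f '' B l) + ε * (2:ℝ≥0∞)⁻¹^(l.length + 1) := by
      rw [ENNReal.iSup_add]
      apply (iSup_lt_iff).2
      exact ⟨μ (f '' B l), ENNReal.lt_add_right (measure_ne_top μ _) hpos.ne', fun m => (hcon m).le⟩
    rw [hU] at this
    exact absurd rfl this.ne
  choose step hstep using step_ex
  -- the recursive list
  let l : ℕ → List ℕ := fun i => Nat.rec [] (fun _ li => li ++ [step li]) i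
  have hl0 : l 0 = [] := rfl
  have hlsucc : ∀ i, l (i + 1) = l i ++ [step (l i)] := fun i => rfl
  have hllen : ∀ i, (l i).length = i := by
    intro i; induction i with
    | zero => rfl
    | succ n ih => rw [hlsucc, List.length_append, ih]; rfl
  set k : ℕ → ℕ := fun i => step (l i) with hk
  -- invariant
  have hinv : ∀ i, μ A ≤ μ (f '' B (l i)) + ∑ j ∈ Finset.range i, ε * (2:ℝ≥0∞)⁻¹^(j+1) := by
    intro i
    induction i with
    | zero =>
      simp [hl0, hBnil, image_univ, frange]
    | succ n ih =>
      refine ih.trans ?_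
      rw [Finset.sum_range_succ]
      have hst := hstep (l n)
      rw [hllen, ← hlsucc] at hst
      calc μ (f '' B (l n)) + ∑ j ∈ Finset.range n, ε * (2:ℝ≥0∞)⁻¹ ^ (j + 1)
          ≤ (μ (f '' B (l (n+1))) + ε * (2:ℝ≥0∞)⁻¹ ^ (n + 1))
            + ∑ j ∈ Finset.range n, ε * (2:ℝ≥0∞)⁻¹ ^ (j + 1) := by gcongr
        _ = μ (f '' B (l (n+1)))
            + (∑ j ∈ Finset.range n, ε * (2:ℝ≥0∞)⁻¹ ^ (j + 1) + ε * (2:ℝ≥0∞)⁻¹ ^ (n + 1)) := by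
            ring
  have hinv' : ∀ i, μ A ≤ μ (f '' B (l i)) + ε := by
    intro i
    refine (hinv i).trans ?_
    gcongr
    calc (∑ j ∈ Finset.range i, ε * (2:ℝ≥0∞)⁻¹^(j+1))
        = ε * ∑ j ∈ Finset.range i, (2:ℝ≥0∞)⁻¹^(j+1) := by rw [Finset.mul_sum]
      _ ≤ ε * 1 := by gcongr; exact sum_inv_pow_le_one i
      _ = ε := mul_one ε
  -- the compact set
  set L : Set (ℕ → ℕ) := univ.pi (fun i => Iic (k i)) with hL
  have hLcomp : IsCompact L := isCompact_univ_pi (fun i => (finite_Iic (k i)).isCompact)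
  have hBL : ∀ i, ∀ x ∈ B (l i), ∀ j < i, x j ≤ k j := by
    intro i
    induction i with
    | zero => intro x _ j hj; omega
    | succ n ih =>
      intro x hx j hj
      rw [hlsucc, hBapp] at hx
      rcases lt_or_ge j n with h | h
      · exact ih x hx.1 j h
      · have : j = n := by omega
        subst this
        have := hx.2
        rwa [hllen] at this
  set K : Set α := f '' L with hK
  have hKcomp : IsCompact K := hLcomp.image fcont
  have hKA : K ⊆ A := by rw [hK, ← frange]; exact image_subset_range f L
  refine ⟨K, hKcomp, hKA, ?_⟩
  -- key topological claim
  have hopen : ∀ U : Set α, IsOpen U → K ⊆ U → ∃ i, f '' B (l i) ⊆ U := by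
    intro U hUopen hKU
    by_contra hcon
    push_neg at hcon
    have hcon' : ∀ i, ∃ x ∈ B (l i), f x ∉ U := by
      intro i
      rcases Set.not_subset.1 (hcon i) with ⟨y, hy1, hy2⟩
      rcases hy1 with ⟨x, hx, rfl⟩
      exact ⟨x, hx, hy2⟩
    choose x hx1 hx2 using hcon'
    -- a compact set containing the whole sequence
    set Kb : ℕ → ℕ := fun j => max (k j) (Finset.sup (Finset.range (j+1)) (fun i => x i j))
    set C : Set (ℕ → ℕ) := univ.pi (fun j => Iic (Kb j)) with hC
    have hCcomp : IsCompact C := isCompact_univ_pi (fun i => (finite_Iic (Kb i)).isCompact)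
    have hxC : ∀ i, x i ∈ C := by
      intro i j _
      simp only [mem_Iic]
      rcases lt_or_ge j i with h | h
      · exact le_max_of_le_left (hBL i (x i) (hx1 i) j h)
      · exact le_max_of_le_right
          (Finset.le_sup (f := fun i' => x i' j) (Finset.mem_range.mpr (Nat.lt_succ_of_le h)))
    obtain ⟨a, haC, φ, hφ, hconv⟩ := hCcomp.tendsto_subseq hxC
    have haL : a ∈ L := by
      intro j _
      simp only [mem_Iic]
      have hcoord : Filter.Tendsto (fun i => x (φ i) j) Filter.atTop (nhds (a j)) :=
        (continuous_apply j).continuousAt.tendsto.comp hconv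
      have hev : ∀ᶠ i in Filter.atTop, x (φ i) j = a j := by
        have : IsOpen ({a j} : Set ℕ) := isOpen_discrete _
        filter_upwards [hcoord.eventually_mem (this.mem_nhds rfl)] with i hi
        exact hi
      have hev2 : ∀ᶠ i in Filter.atTop, x (φ i) j ≤ k j := by
        filter_upwards [Filter.eventually_ge_atTop (j+1)] with i hi
        exact hBL (φ i) (x (φ i)) (hx1 (φ i)) j (lt_of_lt_of_le (by omega) (hφ.le_apply))
      rcases (hev.and hev2).exists with ⟨i, h1, h2⟩
      omega
    have hfa : f a ∈ U := hKU ⟨a, haL, rfl⟩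
    have : Filter.Tendsto (fun i => f (x (φ i))) Filter.atTop (nhds (f a)) :=
      (fcont.continuousAt.tendsto).comp hconv
    rcases (this.eventually_mem (hUopen.mem_nhds hfa)).exists with ⟨i, hi⟩
    exact hx2 (φ i) hi
  -- conclude via outer regularity
  have main : ∀ U : Set α, IsOpen U → K ⊆ U → μ A ≤ μ U + ε := by
    intro U hU hKU
    rcases hopen U hU hKU with ⟨i, hi⟩
    exact (hinv' i).trans (by gcongr)
  by_contra hcontra
  push_neg at hcontra
  have hKlt : μ K < μ K + 1 := ENNReal.lt_add_right (measure_ne_top μ _) one_ne_zero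
  -- μ K < μ A - ε in the sense: μ K + ε < μ A
  obtain ⟨U, hKU, hUopen, hUlt⟩ := Set.exists_isOpen_lt_of_lt K (μ A - ε)
    ((ENNReal.cancel_of_ne hε').lt_tsub_iff_right.mpr hcontra)
  have := main U hUopen hKU
  have h2 : μ U + ε < (μ A - ε) + ε := ENNReal.add_lt_add_right hε' hUlt
  have hεA : ε ≤ μ A := le_trans le_add_self hcontra.le
  have h3 : (μ A - ε) + ε = μ A := tsub_add_cancel_of_le hεA
  exact absurd this (not_le.2 (h2.trans_le h3.le))

/-- Analytic sets are universally measurable (w.r.t. finite measures). -/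
theorem analyticSet_nullMeasurableSet {A : Set α} (hA : AnalyticSet A)
    (μ : Measure α) [IsFiniteMeasure μ] : NullMeasurableSet A μ := by
  have hKex : ∀ m : ℕ, ∃ K, IsCompact K ∧ K ⊆ A ∧ μ A ≤ μ K + ((m:ℝ≥0∞)+1)⁻¹ := by
    intro m
    refine analyticSet_exists_isCompact_le μ hA ?_ ?_
    · simp
    · simp [ENNReal.inv_ne_top]
  choose K hK1 hK2 hK3 using hKex
  set Bs : Set α := ⋃ m, K m with hBs
  have hBmeas : MeasurableSet Bs :=
    MeasurableSet.iUnion (fun m => ((hK1 m).isClosed.measurableSet))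
  have hBA : Bs ⊆ A := iUnion_subset hK2
  set H : Set α := toMeasurable μ A with hH
  have hBH : Bs ⊆ H := hBA.trans (subset_toMeasurable μ A)
  have hdiff : ∀ m : ℕ, μ (H \ Bs) ≤ ((m:ℝ≥0∞)+1)⁻¹ := by
    intro m
    have h1 : μ (H \ Bs) = μ H - μ Bs :=
      measure_diff hBH hBmeas.nullMeasurableSet (measure_ne_top μ Bs)
    rw [h1, tsub_le_iff_right, measure_toMeasurable]
    calc μ A ≤ μ (K m) + ((m:ℝ≥0∞)+1)⁻¹ := hK3 m
      _ ≤ μ Bs + ((m:ℝ≥0∞)+1)⁻¹ := add_le_add (measure_mono (subset_iUnion K m)) le_rfl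
      _ = ((m:ℝ≥0∞)+1)⁻¹ + μ Bs := add_comm _ _
  have hzero : μ (H \ Bs) = 0 := by
    by_contra h
    obtain ⟨m, hm⟩ := ENNReal.exists_inv_nat_lt h
    have h1 : ((m:ℝ≥0∞)+1)⁻¹ ≤ ((m:ℝ≥0∞))⁻¹ := by
      gcongr
      exact le_self_add
    exact absurd ((hdiff m).trans h1) (not_le.2 hm)
  have hAB : μ (A \ Bs) = 0 :=
    le_antisymm (le_trans (measure_mono (diff_subset_diff_left (subset_toMeasurable μ A)))
      hzero.le) zero_le
  have : A = Bs ∪ (A \ Bs) := (union_diff_cancel hBA).symm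
  rw [this]
  exact hBmeas.nullMeasurableSet.union (NullMeasurableSet.of_null hAB)




end EgorovAux

/-- An ideal on a (countable) set `X`. -/
def IsIdeal {X : Type} (I : Set (Set X)) : Prop :=
  (∀ A B : Set X, A ∈ I → B ∈ I → A ∪ B ∈ I) ∧
  (∀ A B : Set X, A ⊆ B → B ∈ I → A ∈ I) ∧
  (∀ A : Set X, A.Finite → A ∈ I) ∧
  (Set.univ : Set X) ∉ I

/-- `I`-pointwise convergence on `[0,1]` of a family of functions. -/
def IConvPtwise {X : Type} (I : Set (Set X)) (f : X → ℝ → ℝ) (g : ℝ → ℝ) : Prop :=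
  ∀ t ∈ Icc (0:ℝ) 1, ∀ ε : ℝ, 0 < ε → {a : X | ε ≤ |f a t - g t|} ∈ I

/-- `I`-uniform convergence on `M` of a family of functions. -/
def IConvUnif {X : Type} (I : Set (Set X)) (f : X → ℝ → ℝ) (g : ℝ → ℝ) (M : Set ℝ) : Prop :=
  ∀ ε : ℝ, 0 < ε → {a : X | ∃ t ∈ M, ε ≤ |f a t - g t|} ∈ I

/-- `I` is an Egorov ideal. -/
def IsEgorov {X : Type} (I : Set (Set X)) : Prop :=
  ∀ (f : X → ℝ → ℝ) (g : ℝ → ℝ),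
    (∀ a : X, AEMeasurable (f a) (volume.restrict (Icc (0:ℝ) 1))) →
    AEMeasurable g (volume.restrict (Icc (0:ℝ) 1)) →
    IConvPtwise I f g →
    ∀ η : ℝ, 0 < η →
      ∃ M : Set ℝ, M ⊆ Icc (0:ℝ) 1 ∧ NullMeasurableSet M volume ∧
        volume (Icc (0:ℝ) 1 \ M) < ENNReal.ofReal η ∧
        IConvUnif I f g M

def IsSubmeasure (φ : Set ℕ → ENNReal) : Prop :=
  φ ∅ = 0 ∧ (∀ n : ℕ, φ {n} < ⊤) ∧
  ∀ A B : Set ℕ, φ A ≤ φ (A ∪ B) ∧ φ (A ∪ B) ≤ φ A + φ B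

def IsLscSubmeasure (φ : Set ℕ → ENNReal) : Prop :=
  ∀ A : Set ℕ, φ A = ⨆ n : ℕ, φ (A ∩ Iio n)

def IsNonpathological (φ : Set ℕ → ENNReal) : Prop :=
  ∀ A : Set ℕ, φ A = ⨆ (μ : Measure ℕ) (_ : ∀ B : Set ℕ, μ B ≤ φ B), μ A

/-- `I` is a non-pathological Σ⁰₂ ideal: `I = Fin(φ)` for some non-pathological
lsc submeasure `φ` with `φ(ω) = ∞`. -/
def IsNonpathSigma2 (I : Set (Set ℕ)) : Prop :=
  ∃ φ : Set ℕ → ENNReal, IsSubmeasure φ ∧ IsLscSubmeasure φ ∧ IsNonpathological φ ∧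
    φ Set.univ = ⊤ ∧ I = {A : Set ℕ | φ A < ⊤}

def IdealCountablyGenerated {X : Type} (I : Set (Set X)) : Prop :=
  ∃ B : Set (Set X), B.Countable ∧ B ⊆ I ∧
    ∀ A ∈ I, ∃ F : Set (Set X), F ⊆ B ∧ F.Finite ∧ A ⊆ ⋃₀ F

def IdealIso {X Y : Type} (I : Set (Set X)) (J : Set (Set Y)) : Prop :=
  ∃ f : Y → X, Function.Bijective f ∧ ∀ A : Set X, (A ∈ I ↔ f ⁻¹' A ∈ J)

def RKle {X Y : Type} (I : Set (Set X)) (J : Set (Set Y)) : Prop :=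
  ∃ f : Y → X, ∀ A : Set X, (A ∈ I ↔ f ⁻¹' A ∈ J)

def RBle {X Y : Type} (I : Set (Set X)) (J : Set (Set Y)) : Prop :=
  ∃ f : Y → X, (∀ x : X, (f ⁻¹' {x}).Finite) ∧ ∀ A : Set X, (A ∈ I ↔ f ⁻¹' A ∈ J)

/-- The restriction `I↾A` of an ideal, as an ideal on the subtype `↥A`. -/
def restrictIdeal {X : Type} (I : Set (Set X)) (A : Set X) : Set (Set ↥A) :=
  {S : Set ↥A | (Subtype.val '' S) ∈ I}

def IsTall {X : Type} (I : Set (Set X)) : Prop :=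
  ∀ A : Set X, A.Infinite → ∃ B ∈ I, B.Infinite ∧ B ⊆ A

/-- The `J`-sum `∑^J_{n∈ω} I_n` on `ω²`: sets whose `I_n`-positive sections form a `J`-set. -/
def idealSumOver (J : Set (Set ℕ)) (I : ℕ → Set (Set ℕ)) : Set (Set (ℕ × ℕ)) :=
  {M : Set (ℕ × ℕ) | {n : ℕ | {k : ℕ | (n, k) ∈ M} ∉ I n} ∈ J}

/-- The identification of `P(X)` with the Cantor space `2^X`. -/
def idealChar {X : Type} (I : Set (Set X)) : Set (X → Bool) :=
  {x : X → Bool | {a : X | x a = true} ∈ I}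

/-- An ideal on `ω` is analytic if it is an analytic subset of the Cantor space `2^ω`. -/
def IsAnalyticIdeal (I : Set (Set ℕ)) : Prop := MeasureTheory.AnalyticSet (idealChar I)


namespace EgorovAux

/-- The basic closure properties of an ideal that we need. -/
def IdealBasic {X : Type} (I : Set (Set X)) : Prop :=
  (∅ ∈ I) ∧ (∀ A B : Set X, A ⊆ B → B ∈ I → A ∈ I) ∧
    (∀ A B : Set X, A ∈ I → B ∈ I → A ∪ B ∈ I)

theorem IsIdeal.basic {X : Type} {I : Set (Set X)} (h : IsIdeal I) : IdealBasic I :=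
  ⟨h.2.2.1 ∅ finite_empty, h.2.1, h.1⟩

lemma nullMeasurable_level {f g : ℝ → ℝ} (hf : AEMeasurable f (volume.restrict (Icc (0:ℝ) 1)))
    (hg : AEMeasurable g (volume.restrict (Icc (0:ℝ) 1))) (c : ℝ) :
    NullMeasurableSet {t | t ∈ Icc (0:ℝ) 1 ∧ c ≤ |f t - g t|}
      (volume.restrict (Icc (0:ℝ) 1)) := by
  have h : AEMeasurable (fun t => |f t - g t|) (volume.restrict (Icc (0:ℝ) 1)) :=
    measurable_abs.comp_aemeasurable (hf.sub hg)
  have heq : {t | t ∈ Icc (0:ℝ) 1 ∧ c ≤ |f t - g t|}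
      = Icc (0:ℝ) 1 ∩ (fun t => |f t - g t|) ⁻¹' Ici c := by
    ext t; simp [Set.mem_setOf_eq, Set.mem_inter_iff, and_comm]
  rw [heq]
  exact measurableSet_Icc.nullMeasurableSet.inter (h.nullMeasurable measurableSet_Ici)

lemma aemeasurable_indicator_one' {S : Set ℝ} {μ : Measure ℝ} (hS : NullMeasurableSet S μ) :
    AEMeasurable (S.indicator (fun _ => (1:ℝ))) μ := by
  obtain ⟨D, hDS, hDm, hae⟩ := hS.exists_measurable_subset_ae_eq
  exact (measurable_const.indicator hDm).aemeasurable.congr (indicator_ae_eq_of_ae_eq_set hae)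

/-- The "indicator family" Egorov property at level `η`. -/
def PIdeal {X : Type} (I : Set (Set X)) (η : ℝ) : Prop :=
  ∀ S : X → Set ℝ,
    (∀ a, S a ⊆ Icc (0:ℝ) 1) →
    (∀ a, NullMeasurableSet (S a) (volume.restrict (Icc (0:ℝ) 1))) →
    (∀ t ∈ Icc (0:ℝ) 1, {a | t ∈ S a} ∈ I) →
    ∃ M, M ⊆ Icc (0:ℝ) 1 ∧ NullMeasurableSet M volume ∧
      volume (Icc (0:ℝ) 1 \ M) < ENNReal.ofReal η ∧ {a | (S a ∩ M).Nonempty} ∈ I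

theorem PIdeal.mono {X : Type} {I : Set (Set X)} {η η' : ℝ} (h : PIdeal I η) (hle : η ≤ η') :
    PIdeal I η' := by
  intro S h1 h2 h3
  obtain ⟨M, hM1, hM2, hM3, hM4⟩ := h S h1 h2 h3
  exact ⟨M, hM1, hM2, hM3.trans_le (ENNReal.ofReal_le_ofReal hle), hM4⟩

/-- Egorov implies the indicator property at every positive level. -/
theorem IsEgorov.pIdeal {X : Type} {I : Set (Set X)} (hI : IdealBasic I) (hE : IsEgorov I)
    {η : ℝ} (hη : 0 < η) : PIdeal I η := by
  intro S hSub hNull hSec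
  set f : X → ℝ → ℝ := fun a => (S a).indicator (fun _ => (1:ℝ)) with hf
  have hfm : ∀ a, AEMeasurable (f a) (volume.restrict (Icc (0:ℝ) 1)) := fun a =>
    aemeasurable_indicator_one' (hNull a)
  have hgm : AEMeasurable (fun _ : ℝ => (0:ℝ)) (volume.restrict (Icc (0:ℝ) 1)) :=
    aemeasurable_const
  have hptw : IConvPtwise I f (fun _ => 0) := by
    intro t ht ε hε
    by_cases hε1 : ε ≤ 1
    · refine hI.2.1 _ {a | t ∈ S a} ?_ (hSec t ht)
      intro a ha
      simp only [Set.mem_setOf_eq] at ha ⊢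
      by_contra hcon
      have h0 : f a t = 0 := by simp [hf, Set.indicator_of_notMem hcon]
      rw [h0] at ha
      simp at ha
      linarith
    · have hemp : {a : X | ε ≤ |f a t - 0|} = ∅ := by
        ext a
        simp only [Set.mem_setOf_eq, Set.mem_empty_iff_false, iff_false, not_le, sub_zero]
        have hb : |f a t| ≤ 1 := by
          by_cases hmem : t ∈ S a <;>
            simp [hf, Set.indicator_of_mem, Set.indicator_of_notMem, hmem]
        linarith [not_le.1 hε1]
      rw [hemp]
      exact hI.1
  obtain ⟨M, hM1, hM2, hM3, hM4⟩ := hE f (fun _ => 0) hfm hgm hptw η hη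
  refine ⟨M, hM1, hM2, hM3, ?_⟩
  refine hI.2.1 _ _ ?_ (hM4 1 one_pos)
  rintro a ⟨t, htS, htM⟩
  exact ⟨t, htM, by simp [hf, Set.indicator_of_mem htS]⟩

/-- The indicator property at all levels implies Egorov. -/
theorem pIdeal_isEgorov {X : Type} {I : Set (Set X)} (hI : IdealBasic I)
    (h : ∀ η : ℝ, 0 < η → PIdeal I η) : IsEgorov I := by
  intro f g hf hg hconv η hη
  set S : ℕ → X → Set ℝ := fun j a => {t | t ∈ Icc (0:ℝ) 1 ∧ 1/(j+1:ℝ) ≤ |f a t - g t|} with hS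
  have hMex : ∀ j : ℕ, ∃ M, M ⊆ Icc (0:ℝ) 1 ∧ NullMeasurableSet M volume ∧
      volume (Icc (0:ℝ) 1 \ M) < ENNReal.ofReal (η / 2^(j+2)) ∧
      {a | (S j a ∩ M).Nonempty} ∈ I := by
    intro j
    refine h (η / 2^(j+2)) (by positivity) (S j) ?_ ?_ ?_
    · intro a t ht; exact ht.1
    · intro a; exact nullMeasurable_level (hf a) hg _
    · intro t ht
      have hsec : {a | t ∈ S j a} = {a | 1/(j+1:ℝ) ≤ |f a t - g t|} := by
        ext a; simp [hS, ht.1, ht.2]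
      rw [hsec]
      exact hconv t ht _ (by positivity)
  choose M hM1 hM2 hM3 hM4 using hMex
  refine ⟨⋂ j, M j, (iInter_subset M 0).trans (hM1 0), NullMeasurableSet.iInter (fun j => hM2 j),
    ?_, ?_⟩
  · have hsub : Icc (0:ℝ) 1 \ ⋂ j, M j ⊆ ⋃ j, (Icc (0:ℝ) 1 \ M j) := by
      intro t ht
      rcases ht with ⟨ht1, ht2⟩
      simp only [Set.mem_iInter, not_forall] at ht2
      obtain ⟨j, hj⟩ := ht2
      exact Set.mem_iUnion.2 ⟨j, ht1, hj⟩
    have hterm : ∀ j : ℕ, ENNReal.ofReal (η / 2^(j+2))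
        = ENNReal.ofReal η * (2:ℝ≥0∞)⁻¹^(j+2) := by
      intro j
      have h1 : η / 2^(j+2) = η * ((2:ℝ)⁻¹)^(j+2) := by
        rw [inv_pow]; ring
      rw [h1, ENNReal.ofReal_mul hη.le, ENNReal.ofReal_pow (by norm_num)]
      congr 2
      rw [ENNReal.ofReal_inv_of_pos (by norm_num)]
      norm_num
    calc volume (Icc (0:ℝ) 1 \ ⋂ j, M j) ≤ volume (⋃ j, (Icc (0:ℝ) 1 \ M j)) :=
          measure_mono hsub
      _ ≤ ∑' j, volume (Icc (0:ℝ) 1 \ M j) := measure_iUnion_le _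
      _ ≤ ∑' j : ℕ, ENNReal.ofReal η * (2:ℝ≥0∞)⁻¹^(j+2) := by
          refine ENNReal.tsum_le_tsum (fun j => ?_)
          exact (hM3 j).le.trans (hterm j).le
      _ = ENNReal.ofReal η * ((∑' j : ℕ, (2:ℝ≥0∞)⁻¹^j) * (2:ℝ≥0∞)⁻¹^2) := by
          rw [ENNReal.tsum_mul_left]
          congr 1
          rw [← ENNReal.tsum_mul_right]
          congr 1
          ext j
          rw [pow_add]
      _ = ENNReal.ofReal η * 2⁻¹ := by
          congr 1
          rw [ENNReal.tsum_geometric, ENNReal.one_sub_inv_two, inv_inv, pow_two, ← mul_assoc,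
            ENNReal.mul_inv_cancel (by norm_num) (by norm_num), one_mul]
      _ = ENNReal.ofReal η / 2 := by rw [ENNReal.div_eq_inv_mul, mul_comm]
      _ < ENNReal.ofReal η := ENNReal.half_lt_self
          (by simpa using hη) ENNReal.ofReal_ne_top
  · intro ε hε
    obtain ⟨j, hj⟩ := exists_nat_one_div_lt hε
    refine hI.2.1 _ {a | (S j a ∩ M j).Nonempty} ?_ (hM4 j)
    rintro a ⟨t, htM, hineq⟩
    have htj : t ∈ M j := Set.mem_iInter.1 htM j
    exact ⟨t, ⟨hM1 j htj, le_trans hj.le hineq⟩, htj⟩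

theorem PIdeal.mul {X : Type} {I : Set (Set X)} (hI : IdealBasic I) {η₁ η₂ : ℝ}
    (hη₁ : 0 < η₁) (hη₂ : 0 < η₂) (h1 : PIdeal I η₁) (h2 : PIdeal I η₂) :
    PIdeal I (η₁ * η₂) := by
  intro S hSub hNull hSec
  obtain ⟨M₁, hM₁s, hM₁n, hM₁m, hG₁⟩ := h1 S hSub hNull hSec
  set C : Set ℝ := Icc (0:ℝ) 1 \ M₁ with hCdef
  by_cases hc0 : volume C = 0
  · refine ⟨M₁, hM₁s, hM₁n, ?_, hG₁⟩
    rw [show Icc (0:ℝ) 1 \ M₁ = C from rfl, hc0]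
    exact ENNReal.ofReal_pos.2 (by positivity)
  have hCn : NullMeasurableSet C volume := measurableSet_Icc.nullMeasurableSet.diff hM₁n
  obtain ⟨C', hC'sub, hC'm, hC'ae⟩ := hCn.exists_measurable_subset_ae_eq
  have hC'Icc : C' ⊆ Icc (0:ℝ) 1 := hC'sub.trans diff_subset
  have hcC : volume C' = volume C := measure_congr hC'ae
  set c : ℝ≥0∞ := volume C' with hcdef
  have hcne : c ≠ 0 := by rw [hcC]; exact hc0
  have hclt : c < ENNReal.ofReal η₁ := by rw [hcC]; exact hM₁m
  have hcfin : c ≠ ⊤ := hclt.ne_top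
  -- distribution function
  set F : ℝ → ℝ := fun t => (volume (C' ∩ Iic t)).toReal with hFdef
  have hFle : ∀ t, volume (C' ∩ Iic t) ≤ c := fun t => measure_mono inter_subset_left
  have hFfin : ∀ t, volume (C' ∩ Iic t) ≠ ⊤ := fun t =>
    ((hFle t).trans_lt (hclt.trans_le le_top)).ne
  have hFmono : Monotone F := fun t t' h => ENNReal.toReal_mono (hFfin t')
    (measure_mono (inter_subset_inter_right _ (Iic_subset_Iic.2 h)))
  have hFstep : ∀ x y : ℝ, x ≤ y → F y ≤ F x + (y - x) := by
    intro x y hxy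
    have hsplit : C' ∩ Iic y = (C' ∩ Iic x) ∪ (C' ∩ Ioc x y) := by
      rw [← inter_union_distrib_left, Iic_union_Ioc_eq_Iic hxy]
    have hm : volume (C' ∩ Iic y) ≤ volume (C' ∩ Iic x) + ENNReal.ofReal (y - x) := by
      rw [hsplit]
      refine (measure_union_le _ _).trans ?_
      gcongr
      refine (measure_mono inter_subset_right).trans ?_
      rw [Real.volume_Ioc]
    have := ENNReal.toReal_mono (by
        refine ENNReal.add_ne_top.2 ⟨hFfin x, ENNReal.ofReal_ne_top⟩) hm
    rw [ENNReal.toReal_add (hFfin x) ENNReal.ofReal_ne_top,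
      ENNReal.toReal_ofReal (by linarith)] at this
    exact this
  have hFcont : Continuous F := by
    refine (LipschitzWith.of_dist_le_mul (K := 1) ?_).continuous
    intro x y
    rw [NNReal.coe_one, one_mul, Real.dist_eq, Real.dist_eq]
    rcases le_total x y with h | h
    · rw [abs_of_nonpos (by linarith [hFmono h]), abs_of_nonpos (by linarith)]
      have := hFstep x y h
      linarith
    · rw [abs_of_nonneg (by linarith [hFmono h]), abs_of_nonneg (by linarith)]
      have := hFstep y x h
      linarith
  have hF0 : F 0 = 0 := by
    have hsub0 : C' ∩ Iic (0:ℝ) ⊆ {0} := by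
      rintro t ⟨h1, h2⟩
      exact le_antisymm h2 (hC'Icc h1).1
    have : volume (C' ∩ Iic (0:ℝ)) = 0 :=
      le_antisymm ((measure_mono hsub0).trans (by simp)) zero_le
    rw [hFdef]; simp [this]
  have hF1 : F 1 = c.toReal := by
    have hh : C' ∩ Iic (1:ℝ) = C' := inter_eq_left.2 (fun t ht => (hC'Icc ht).2)
    simp only [hFdef, hh]; rfl
  have hctR : 0 < c.toReal := ENNReal.toReal_pos hcne hcfin
  set G : ℝ → ℝ := fun t => F t / c.toReal with hGdef
  have hGmono : Monotone G := by
    intro t t' h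
    show F t / c.toReal ≤ F t' / c.toReal
    gcongr
    exact hFmono h
  have hGcont : Continuous G := hFcont.div_const _
  have hG0 : G 0 = 0 := by rw [hGdef]; simp [hF0]
  have hG1 : G 1 = 1 := by rw [hGdef]; simp [hF1]; exact hctR.ne'
  have hGnonneg : ∀ t, 0 ≤ G t := by
    intro t
    rcases le_total t 0 with h | h
    · have : G t ≤ G 0 := hGmono h
      rw [hG0] at this
      have h2 : 0 ≤ F t := by
        rw [hFdef]; exact ENNReal.toReal_nonneg
      exact div_nonneg h2 hctR.le
    · rw [← hG0]; exact hGmono h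
  -- clamp
  set cl : ℝ → ℝ := fun s => max 0 (min 1 s) with hcl
  have hcl_mem : ∀ s, cl s ∈ Icc (0:ℝ) 1 := by
    intro s
    constructor
    · exact le_max_left _ _
    · rw [hcl]
      simp only [max_le_iff]
      exact ⟨zero_le_one, min_le_left _ _⟩
  have hcl_id : ∀ s ∈ Icc (0:ℝ) 1, cl s = s := by
    rintro s ⟨h0, h1⟩
    rw [hcl]
    simp only [min_eq_right h1, max_eq_right h0]
  have hcl_mono : Monotone cl := fun s s' h =>
    max_le_max le_rfl (min_le_min le_rfl h)
  -- theta
  set T : ℝ → Set ℝ := fun s => {t | t ∈ Icc (0:ℝ) 1 ∧ cl s ≤ G t} with hTdef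
  have hT1 : ∀ s, (1:ℝ) ∈ T s := by
    intro s
    exact ⟨⟨zero_le_one, le_rfl⟩, by rw [hG1]; exact (hcl_mem s).2⟩
  have hTclosed : ∀ s, IsClosed (T s) := by
    intro s
    have : T s = Icc (0:ℝ) 1 ∩ G ⁻¹' Ici (cl s) := by
      ext t; simp [hTdef, Set.mem_setOf_eq, and_comm]
    rw [this]
    exact isClosed_Icc.inter (isClosed_Ici.preimage hGcont)
  have hTbdd : ∀ s, BddBelow (T s) := fun s => ⟨0, fun t ht => ht.1.1⟩
  set θ : ℝ → ℝ := fun s => sInf (T s) with hθdef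
  have hθT : ∀ s, θ s ∈ T s := fun s => (hTclosed s).csInf_mem ⟨1, hT1 s⟩ (hTbdd s)
  have hθIcc : ∀ s, θ s ∈ Icc (0:ℝ) 1 := fun s => (hθT s).1
  have hθle : ∀ s t, t ∈ T s → θ s ≤ t := fun s t ht => csInf_le (hTbdd s) ht
  have hGθ : ∀ s, G (θ s) = cl s := by
    intro s
    have hmem : cl s ∈ Icc (G 0) (G (θ s)) := by
      rw [hG0]
      exact ⟨(hcl_mem s).1, (hθT s).2⟩
    obtain ⟨t, ht, hGt⟩ := intermediate_value_Icc (hθIcc s).1 hGcont.continuousOn hmem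
    have h1 : θ s ≤ t := hθle s t ⟨⟨ht.1, ht.2.trans (hθIcc s).2⟩, hGt.symm.le⟩
    have h2 : t = θ s := le_antisymm ht.2 h1
    rw [← h2, hGt]
  have hθmono : Monotone θ := by
    intro s s' h
    refine csInf_le_csInf (hTbdd s) ⟨1, hT1 s'⟩ ?_
    intro t ht
    exact ⟨ht.1, (hcl_mono h).trans ht.2⟩
  have hθmeas : Measurable θ := hθmono.measurable
  have hθinj : ∀ s ∈ Icc (0:ℝ) 1, ∀ s' ∈ Icc (0:ℝ) 1, θ s = θ s' → s = s' := by
    intro s hs s' hs' heq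
    have := hGθ s
    rw [heq, hGθ s', hcl_id s hs, hcl_id s' hs'] at this
    exact this.symm
  -- pushforward
  set ν : Measure ℝ := Measure.map θ (volume.restrict (Icc (0:ℝ) 1)) with hνdef
  have hν_apply : ∀ E : Set ℝ, MeasurableSet E → ν E = volume ((θ ⁻¹' E) ∩ Icc (0:ℝ) 1) := by
    intro E hE
    rw [hνdef, Measure.map_apply hθmeas hE, Measure.restrict_apply (hθmeas hE)]
  haveI hνfin : IsFiniteMeasure ν := by
    constructor
    rw [hν_apply univ MeasurableSet.univ]
    simp only [Set.preimage_univ, Set.univ_inter]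
    rw [Real.volume_Icc]
    norm_num
  set ρ : Measure ℝ := c⁻¹ • volume.restrict C' with hρdef
  have hρ_apply : ∀ E : Set ℝ, MeasurableSet E → ρ E = c⁻¹ * volume (E ∩ C') := by
    intro E hE
    rw [hρdef, Measure.smul_apply, Measure.restrict_apply hE, smul_eq_mul]
  have hνρ : ν = ρ := by
    refine Measure.ext_of_Iic ν ρ ?_
    intro t
    rw [hν_apply _ measurableSet_Iic, hρ_apply _ measurableSet_Iic]
    rcases lt_or_ge t 0 with ht | ht
    · have h1 : (θ ⁻¹' Iic t) ∩ Icc (0:ℝ) 1 = ∅ := by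
        ext s
        simp only [Set.mem_inter_iff, Set.mem_preimage, Set.mem_Iic, Set.mem_empty_iff_false,
          iff_false, not_and]
        intro hsθ hs
        exact absurd ((hθIcc s).1.trans hsθ) (not_le.2 ht)
      have h2 : Iic t ∩ C' = ∅ := by
        ext u
        simp only [Set.mem_inter_iff, Set.mem_Iic, Set.mem_empty_iff_false, iff_false, not_and]
        intro hu hu2
        exact absurd (hu.trans_lt ht) (not_lt.2 (hC'Icc hu2).1)
      rw [h1, h2]
      simp
    rcases le_or_gt t 1 with ht1 | ht1
    · have hGt : G t ∈ Icc (0:ℝ) 1 := ⟨hGnonneg t, by rw [← hG1]; exact hGmono ht1⟩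
      have h1 : (θ ⁻¹' Iic t) ∩ Icc (0:ℝ) 1 = Icc (0:ℝ) (G t) := by
        ext s
        simp only [Set.mem_inter_iff, Set.mem_preimage, Set.mem_Iic, Set.mem_Icc]
        constructor
        · rintro ⟨hθt, hs0, hs1⟩
          refine ⟨hs0, ?_⟩
          have := hGθ s
          rw [hcl_id s ⟨hs0, hs1⟩] at this
          rw [← this]
          exact hGmono hθt
        · rintro ⟨hs0, hsG⟩
          have hs1 : s ≤ 1 := hsG.trans hGt.2
          refine ⟨?_, hs0, hs1⟩
          refine hθle s t ⟨⟨ht, ht1⟩, ?_⟩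
          rw [hcl_id s ⟨hs0, hs1⟩]
          exact hsG
      rw [h1, Real.volume_Icc, inter_comm]
      have h2 : volume (C' ∩ Iic t) = ENNReal.ofReal (F t) := by
        rw [hFdef, ENNReal.ofReal_toReal (hFfin t)]
      rw [h2]
      rw [show G t - 0 = G t by ring, hGdef]
      rw [ENNReal.ofReal_div_of_pos hctR, ENNReal.ofReal_toReal hcfin]
      rw [ENNReal.div_eq_inv_mul]
    · have h1 : (θ ⁻¹' Iic t) ∩ Icc (0:ℝ) 1 = Icc (0:ℝ) 1 := by
        refine inter_eq_right.2 ?_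
        intro s hs
        exact ((hθIcc s).2.trans ht1.le : θ s ≤ t)
      have h2 : Iic t ∩ C' = C' := by
        refine inter_eq_right.2 ?_
        intro u hu
        exact (hC'Icc hu).2.trans ht1.le
      rw [h1, h2, Real.volume_Icc, hcdef, ENNReal.inv_mul_cancel hcne hcfin]
      norm_num
  have hnull_pre : ∀ E : Set ℝ, MeasurableSet E → volume (E ∩ C') = 0 →
      volume ((θ ⁻¹' E) ∩ Icc (0:ℝ) 1) = 0 := by
    intro E hE h0
    rw [← hν_apply E hE, hνρ, hρ_apply E hE, h0, mul_zero]
  -- the exceptional set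
  set N : Set ℝ := (θ ⁻¹' C'ᶜ) ∩ Icc (0:ℝ) 1 with hNdef
  have hNm : MeasurableSet N := (hθmeas hC'm.compl).inter measurableSet_Icc
  have hNnull : volume N = 0 := hnull_pre C'ᶜ hC'm.compl (by simp)
  have hθC' : ∀ s ∈ Icc (0:ℝ) 1, s ∉ N → θ s ∈ C' := by
    intro s hs hsN
    by_contra hcon
    exact hsN ⟨hcon, hs⟩
  -- the transferred family
  set S' : X → Set ℝ := fun a => ((θ ⁻¹' (S a)) ∩ Icc (0:ℝ) 1) \ N with hS'def
  have hS'sub : ∀ a, S' a ⊆ Icc (0:ℝ) 1 := fun a => fun s hs => hs.1.2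
  have hS'null : ∀ a, NullMeasurableSet (S' a) (volume.restrict (Icc (0:ℝ) 1)) := by
    intro a
    obtain ⟨D, hDsub, hDm, hDae⟩ := (hNull a).exists_measurable_subset_ae_eq
    set E : Set ℝ := toMeasurable (volume.restrict (Icc (0:ℝ) 1)) (S a \ D) with hEdef
    have hEm : MeasurableSet E := measurableSet_toMeasurable _ _
    have hEnull : volume.restrict (Icc (0:ℝ) 1) E = 0 := by
      rw [hEdef, measure_toMeasurable]
      exact (ae_eq_set.1 hDae).2
    have hEsub : S a \ D ⊆ E := subset_toMeasurable _ _
    have hpre_null : volume.restrict (Icc (0:ℝ) 1) ((θ ⁻¹' E)) = 0 := by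
      rw [Measure.restrict_apply (hθmeas hEm)]
      have hE2 : volume (E ∩ C') = 0 := by
        have hres : volume (E ∩ Icc (0:ℝ) 1) = 0 := by
          rw [← Measure.restrict_apply hEm]
          exact hEnull
        refine le_antisymm (le_trans (measure_mono ?_) hres.le) zero_le
        exact inter_subset_inter_right _ hC'Icc
      exact hnull_pre E hEm hE2
    set B : Set ℝ := ((θ ⁻¹' D) ∩ Icc (0:ℝ) 1) \ N with hBdef
    have hBm : MeasurableSet B := ((hθmeas hDm).inter measurableSet_Icc).diff hNm
    refine NullMeasurableSet.congr hBm.nullMeasurableSet ?_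
    rw [Filter.eventuallyEq_set]
    have hae0 : ∀ᵐ s ∂(volume.restrict (Icc (0:ℝ) 1)), s ∉ θ ⁻¹' E := by
      rw [MeasureTheory.ae_iff]
      simpa only [not_not, Set.setOf_mem_eq] using hpre_null
    filter_upwards [hae0] with s hsE
    simp only [hBdef, hS'def, Set.mem_diff, Set.mem_inter_iff, Set.mem_preimage]
    constructor
    · rintro ⟨⟨hsD, hsI⟩, hsN⟩
      exact ⟨⟨hDsub hsD, hsI⟩, hsN⟩
    · rintro ⟨⟨hsS, hsI⟩, hsN⟩
      refine ⟨⟨?_, hsI⟩, hsN⟩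
      by_contra hcon
      exact hsE (hEsub ⟨hsS, hcon⟩)
  have hS'sec : ∀ t ∈ Icc (0:ℝ) 1, {a | t ∈ S' a} ∈ I := by
    intro t ht
    refine hI.2.1 _ {a | θ t ∈ S a} ?_ (hSec (θ t) (hθIcc t))
    intro a ha
    exact ha.1.1
  obtain ⟨M₂, hM₂s, hM₂n, hM₂m, hG₂⟩ := h2 S' hS'sub hS'null hS'sec
  obtain ⟨Mc, hMcsub, hMcm, hMcae⟩ := hM₂n.exists_measurable_subset_ae_eq
  set M₂'' : Set ℝ := Mc \ N with hM2''def
  have hM2''m : MeasurableSet M₂'' := hMcm.diff hNm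
  have hM2''sub : M₂'' ⊆ Icc (0:ℝ) 1 := fun s hs => hM₂s (hMcsub hs.1)
  have hMcnull : volume (M₂ \ Mc) = 0 := (ae_eq_set.1 hMcae).2
  have hM2''meas : volume (Icc (0:ℝ) 1 \ M₂'') < ENNReal.ofReal η₂ := by
    have hsub : Icc (0:ℝ) 1 \ M₂'' ⊆ (Icc (0:ℝ) 1 \ M₂) ∪ ((M₂ \ Mc) ∪ N) := by
      intro s hs
      rcases hs with ⟨hsI, hsM⟩
      by_cases h2 : s ∈ M₂
      · by_cases h3 : s ∈ Mc
        · right; right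
          by_contra hN
          exact hsM ⟨h3, hN⟩
        · right; left; exact ⟨h2, h3⟩
      · left; exact ⟨hsI, h2⟩
    calc volume (Icc (0:ℝ) 1 \ M₂'')
        ≤ volume ((Icc (0:ℝ) 1 \ M₂) ∪ ((M₂ \ Mc) ∪ N)) := measure_mono hsub
      _ ≤ volume (Icc (0:ℝ) 1 \ M₂) + volume ((M₂ \ Mc) ∪ N) := measure_union_le _ _
      _ ≤ volume (Icc (0:ℝ) 1 \ M₂) + (volume (M₂ \ Mc) + volume N) := by
          gcongr
          exact measure_union_le _ _
      _ = volume (Icc (0:ℝ) 1 \ M₂) := by rw [hMcnull, hNnull]; simp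
      _ < ENNReal.ofReal η₂ := hM₂m
  -- the image set
  haveI hSBIcc : StandardBorelSpace (Icc (0:ℝ) 1) := measurableSet_Icc.standardBorel
  set θ' : (Icc (0:ℝ) 1) → ℝ := fun s => θ (s : ℝ) with hθ'def
  have hθ'meas : Measurable θ' := hθmeas.comp measurable_subtype_coe
  have hθ'inj : Function.Injective θ' := by
    intro s s' h
    exact Subtype.ext (hθinj s s.2 s' s'.2 h)
  have hEmb : MeasurableEmbedding θ' := hθ'meas.measurableEmbedding hθ'inj
  set W : Set ℝ := θ '' M₂'' with hWdef
  have hWeq : W = θ' '' (Subtype.val ⁻¹' M₂'') := by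
    ext y
    simp only [hWdef, Set.mem_image, Set.mem_preimage]
    constructor
    · rintro ⟨s, hs, rfl⟩
      exact ⟨⟨s, hM2''sub hs⟩, hs, rfl⟩
    · rintro ⟨⟨s, hsI⟩, hs, rfl⟩
      exact ⟨s, hs, rfl⟩
  have hWm : MeasurableSet W := by
    rw [hWeq]
    exact hEmb.measurableSet_image' (hM2''m.preimage measurable_subtype_coe)
  have hWC' : W ⊆ C' := by
    rintro y ⟨s, hs, rfl⟩
    exact hθC' s (hM2''sub hs) hs.2
  have hWC : W ⊆ C := hWC'.trans hC'sub
  -- measure computation for W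
  have hpreW : (θ ⁻¹' W) ∩ Icc (0:ℝ) 1 = M₂'' := by
    ext s
    simp only [Set.mem_inter_iff, Set.mem_preimage]
    constructor
    · rintro ⟨hsW, hsI⟩
      obtain ⟨s₀, hs₀, heq⟩ := hsW
      rwa [hθinj s hsI s₀ (hM2''sub hs₀) heq.symm]
    · intro hs
      exact ⟨⟨s, hs, rfl⟩, hM2''sub hs⟩
  have hWmeasure : volume W = c * volume M₂'' := by
    have h1 : ν W = volume M₂'' := by rw [hν_apply W hWm, hpreW]
    have h2 : ν W = c⁻¹ * volume W := by
      rw [hνρ, hρ_apply W hWm, inter_eq_left.2 hWC']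
    have h3 : volume M₂'' = c⁻¹ * volume W := by rw [← h1, h2]
    rw [h3, ← mul_assoc, ENNReal.mul_inv_cancel hcne hcfin, one_mul]
  -- final set
  refine ⟨M₁ ∪ W, union_subset hM₁s (hWC.trans diff_subset), hM₁n.union hWm.nullMeasurableSet,
    ?_, ?_⟩
  · have hdiff : Icc (0:ℝ) 1 \ (M₁ ∪ W) = C \ W := by
      rw [hCdef, diff_diff]
    rw [hdiff]
    have hWfin : volume W ≠ ⊤ := ((measure_mono hWC').trans_lt (hclt.trans_le le_top)).ne
    have hsum : volume W + volume (C \ W) = c := by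
      have h := measure_inter_add_diff (μ := volume) C hWm
      rw [inter_eq_right.2 hWC] at h
      rw [h, hcC]
    have hM2''v : volume M₂'' + volume (Icc (0:ℝ) 1 \ M₂'') = 1 := by
      have h := measure_inter_add_diff (μ := volume) (Icc (0:ℝ) 1) hM2''m
      rw [inter_eq_right.2 hM2''sub] at h
      rw [h, Real.volume_Icc]
      norm_num
    have hCW : volume (C \ W) = c * volume (Icc (0:ℝ) 1 \ M₂'') := by
      have h1 : volume W + volume (C \ W)
          = volume W + c * volume (Icc (0:ℝ) 1 \ M₂'') := by
        rw [hsum, hWmeasure, ← mul_add, hM2''v, mul_one]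
      exact (ENNReal.add_right_inj hWfin).1 h1
    rw [hCW]
    calc c * volume (Icc (0:ℝ) 1 \ M₂'') < ENNReal.ofReal η₁ * ENNReal.ofReal η₂ :=
        ENNReal.mul_lt_mul hclt hM2''meas
      _ = ENNReal.ofReal (η₁ * η₂) := (ENNReal.ofReal_mul hη₁.le).symm
  · refine hI.2.1 _ ({a | (S a ∩ M₁).Nonempty} ∪ {a | (S' a ∩ M₂).Nonempty}) ?_
      (hI.2.2 _ _ hG₁ hG₂)
    rintro a ⟨t, htS, htM⟩
    rcases htM with htM | htW
    · left; exact ⟨t, htS, htM⟩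
    · right
      obtain ⟨s, hs, rfl⟩ := htW
      exact ⟨s, ⟨⟨htS, hM2''sub hs⟩, hs.2⟩, hMcsub hs.1⟩


theorem PIdeal.all_of_half {X : Type} {I : Set (Set X)} (hI : IdealBasic I)
    (h : PIdeal I (1/2)) : ∀ η : ℝ, 0 < η → PIdeal I η := by
  have hpow : ∀ k : ℕ, PIdeal I ((1/2)^(k+1)) := by
    intro k
    induction k with
    | zero => simpa using h
    | succ n ih =>
      have := PIdeal.mul hI (by positivity) (by norm_num) ih h
      rw [← pow_succ] at this
      exact this
  intro η hη
  obtain ⟨k, hk⟩ := exists_pow_lt_of_lt_one hη (by norm_num : (1:ℝ)/2 < 1)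
  exact (hpow k).mono (le_trans (by rw [pow_succ]; nlinarith [pow_pos (by norm_num : (0:ℝ) < 1/2) k]) hk.le)

/-- From a non-Egorov ideal, extract an indicator-family witness at level `1/2`. -/
theorem exists_witness_of_not_isEgorov {X : Type} {I : Set (Set X)} (hI : IdealBasic I)
    (h : ¬ IsEgorov I) :
    ∃ S : X → Set ℝ,
      (∀ a, S a ⊆ Icc (0:ℝ) 1) ∧
      (∀ a, NullMeasurableSet (S a) (volume.restrict (Icc (0:ℝ) 1))) ∧
      (∀ t ∈ Icc (0:ℝ) 1, {a | t ∈ S a} ∈ I) ∧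
      (∀ M, M ⊆ Icc (0:ℝ) 1 → NullMeasurableSet M volume →
        volume (Icc (0:ℝ) 1 \ M) < ENNReal.ofReal (1/2) → {a | (S a ∩ M).Nonempty} ∉ I) := by
  by_contra hno
  refine h (pIdeal_isEgorov hI (PIdeal.all_of_half hI (fun S h1 h2 h3 => ?_)))
  by_contra h5
  exact hno ⟨S, h1, h2, h3, fun M hM1 hM2 hM3 hin => h5 ⟨M, hM1, hM2, hM3, hin⟩⟩



lemma ae_eq_of_diffs_null {α : Type*} [MeasurableSpace α] {μ : Measure α} {s t u : Set α}
    (h1 : s \ t ⊆ u) (h2 : t \ s ⊆ u) (hu : μ u = 0) : s =ᵐ[μ] t :=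
  ae_eq_set.2 ⟨measure_mono_null h1 hu, measure_mono_null h2 hu⟩

lemma ofReal_div_pow {η : ℝ} (hη : 0 < η) (m : ℕ) :
    ENNReal.ofReal (η / 2^m) = ENNReal.ofReal η * (2:ℝ≥0∞)⁻¹^m := by
  have h1 : η / 2^m = η * ((2:ℝ)⁻¹)^m := by rw [inv_pow]; ring
  rw [h1, ENNReal.ofReal_mul hη.le, ENNReal.ofReal_pow (by norm_num)]
  congr 2
  rw [ENNReal.ofReal_inv_of_pos (by norm_num)]
  norm_num

lemma mem_idealSumOver {J : Set (Set ℕ)} {I : ℕ → Set (Set ℕ)} {A : Set (ℕ × ℕ)} :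
    A ∈ idealSumOver J I ↔ {n : ℕ | {k : ℕ | (n, k) ∈ A} ∉ I n} ∈ J := Iff.rfl

theorem sum_basic {J : Set (Set ℕ)} {I : ℕ → Set (Set ℕ)} (hJ : IdealBasic J)
    (hI : ∀ n, IdealBasic (I n)) : IdealBasic (idealSumOver J I) := by
  refine ⟨?_, ?_, ?_⟩
  · rw [mem_idealSumOver]
    have h : {n : ℕ | {k : ℕ | (n, k) ∈ (∅ : Set (ℕ × ℕ))} ∉ I n} = ∅ := by
      ext n
      simp only [Set.mem_empty_iff_false, Set.setOf_false, Set.mem_setOf_eq, iff_false, not_not]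
      exact (hI n).1
    rw [h]; exact hJ.1
  · intro A B hAB hB
    rw [mem_idealSumOver] at *
    refine hJ.2.1 _ _ ?_ hB
    intro n hn
    simp only [Set.mem_setOf_eq] at hn ⊢
    intro hB'
    exact hn ((hI n).2.1 _ _ (fun k hk => hAB hk) hB')
  · intro A B hA hB
    rw [mem_idealSumOver] at *
    refine hJ.2.1 _ _ ?_ (hJ.2.2 _ _ hA hB)
    intro n hn
    simp only [Set.mem_setOf_eq, Set.mem_union] at hn ⊢
    by_contra hcon
    push_neg at hcon
    obtain ⟨h1, h2⟩ := hcon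
    refine hn ((hI n).2.1 _ ({k | (n,k) ∈ A} ∪ {k | (n,k) ∈ B}) ?_ ((hI n).2.2 _ _ h1 h2))
    rintro k (hk | hk)
    · exact Or.inl hk
    · exact Or.inr hk

theorem isEgorov_J_of_sum {J : Set (Set ℕ)} {I : ℕ → Set (Set ℕ)}
    (hJ : IsIdeal J) (hI : ∀ n, IsIdeal (I n))
    (hSum : IsEgorov (idealSumOver J I)) : IsEgorov J := by
  intro f g hf hg hconv η hη
  set F : ℕ × ℕ → ℝ → ℝ := fun p => f p.1 with hF
  have hdich : ∀ (P : ℕ → Prop) , {n : ℕ | {k : ℕ | P n} ∉ I n} = {n | P n} := by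
    intro P
    ext n
    simp only [Set.mem_setOf_eq]
    by_cases h : P n
    · simp only [h, Set.setOf_true, iff_true]
      exact (hI n).2.2.2
    · simp only [h, Set.setOf_false, iff_false, not_not]
      exact (hI n).2.2.1 ∅ finite_empty
  have hFconv : IConvPtwise (idealSumOver J I) F g := by
    intro t ht ε hε
    have heq : {p : ℕ × ℕ | ε ≤ |F p t - g t|} ∈ idealSumOver J I ↔
        {n : ℕ | {k : ℕ | ε ≤ |f n t - g t|} ∉ I n} ∈ J := Iff.rfl
    rw [heq, hdich]
    exact hconv t ht ε hε
  obtain ⟨M, hM1, hM2, hM3, hM4⟩ := hSum F g (fun p => hf p.1) hg hFconv η hη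
  refine ⟨M, hM1, hM2, hM3, ?_⟩
  intro ε hε
  have h := hM4 ε hε
  rw [mem_idealSumOver] at h
  have heq : {n : ℕ | {k : ℕ | (n, k) ∈ {p : ℕ × ℕ | ∃ t ∈ M, ε ≤ |F p t - g t|}} ∉ I n}
      = {n : ℕ | {k : ℕ | ∃ t ∈ M, ε ≤ |f n t - g t|} ∉ I n} := rfl
  rw [heq, hdich] at h
  exact h

theorem mem_J_of_sum {J : Set (Set ℕ)} {I : ℕ → Set (Set ℕ)}
    (hJ : IsIdeal J) (hI : ∀ n, IsIdeal (I n))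
    (hSum : IsEgorov (idealSumOver J I)) : {n : ℕ | ¬ IsEgorov (I n)} ∈ J := by
  have hw : ∀ n : ℕ, ∃ S : ℕ → Set ℝ,
      (∀ k, S k ⊆ Icc (0:ℝ) 1) ∧
      (∀ k, NullMeasurableSet (S k) (volume.restrict (Icc (0:ℝ) 1))) ∧
      (∀ t ∈ Icc (0:ℝ) 1, {k | t ∈ S k} ∈ I n) ∧
      (¬ IsEgorov (I n) → ∀ M, M ⊆ Icc (0:ℝ) 1 → NullMeasurableSet M volume →
        volume (Icc (0:ℝ) 1 \ M) < ENNReal.ofReal (1/2) →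
        {k | (S k ∩ M).Nonempty} ∉ I n) := by
    intro n
    by_cases h : IsEgorov (I n)
    · refine ⟨fun _ => ∅, fun k => empty_subset _,
        fun k => MeasurableSet.empty.nullMeasurableSet, fun t ht => ?_, fun hno => absurd h hno⟩
      have : {k : ℕ | t ∈ (∅ : Set ℝ)} = ∅ := by simp
      rw [this]
      exact (IsIdeal.basic (hI n)).1
    · obtain ⟨S, h1, h2, h3, h4⟩ := exists_witness_of_not_isEgorov (IsIdeal.basic (hI n)) h
      exact ⟨S, h1, h2, h3, fun _ => h4⟩
  choose S h1 h2 h3 h4 using hw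
  set Sc : ℕ × ℕ → Set ℝ := fun p => S p.1 p.2 with hSc
  have hPS : PIdeal (idealSumOver J I) (1/2) :=
    IsEgorov.pIdeal (sum_basic (IsIdeal.basic hJ) (fun n => (IsIdeal.basic (hI n)))) hSum (by norm_num)
  have hscsec : ∀ t ∈ Icc (0:ℝ) 1, {a | t ∈ Sc a} ∈ idealSumOver J I := by
    intro t ht
    rw [mem_idealSumOver]
    have heq : {n : ℕ | {k : ℕ | (n, k) ∈ {a : ℕ × ℕ | t ∈ Sc a}} ∉ I n} = ∅ := by
      ext n
      simp only [Set.mem_setOf_eq, Set.mem_empty_iff_false, iff_false, not_not]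
      exact h3 n t ht
    rw [heq]
    exact (IsIdeal.basic hJ).1
  obtain ⟨M, hM1, hM2, hM3, hMhit⟩ :=
    hPS Sc (fun p => h1 p.1 p.2) (fun p => h2 p.1 p.2) hscsec
  rw [mem_idealSumOver] at hMhit
  refine hJ.2.1 _ _ ?_ hMhit
  intro n hn
  simp only [Set.mem_setOf_eq] at hn ⊢
  exact h4 n hn M hM1 hM2 hM3

theorem pIdeal_sum {J : Set (Set ℕ)} {I : ℕ → Set (Set ℕ)}
    (hJ : IsIdeal J) (hI : ∀ n, IsIdeal (I n)) (hIa : ∀ n, IsAnalyticIdeal (I n))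
    (hJE : IsEgorov J) (hA : {n : ℕ | ¬ IsEgorov (I n)} ∈ J) {η : ℝ} (hη : 0 < η) :
    PIdeal (idealSumOver J I) η := by
  classical
  intro Sf hsub hnull hsec
  haveI hfinr : IsFiniteMeasure (volume.restrict (Icc (0:ℝ) 1)) := by
    constructor
    rw [Measure.restrict_apply_univ, Real.volume_Icc]
    norm_num
  -- measurable versions
  choose D hD1 hD2 hD3 using fun p : ℕ × ℕ => (hnull p).exists_measurable_subset_ae_eq
  -- the "bad row" sets
  set R : ℕ → Set ℝ := fun n => {t | t ∈ Icc (0:ℝ) 1 ∧ {k | t ∈ Sf (n,k)} ∉ I n} with hR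
  have hRsub : ∀ n, R n ⊆ Icc (0:ℝ) 1 := fun n t ht => ht.1
  have hRsec : ∀ t ∈ Icc (0:ℝ) 1, {n | t ∈ R n} ∈ J := by
    intro t ht
    have h := hsec t ht
    rw [mem_idealSumOver] at h
    refine (IsIdeal.basic hJ).2.1 _ _ ?_ h
    intro n hn
    exact hn.2
  -- null measurability of R n, via analyticity of I n
  have hRnull : ∀ n, NullMeasurableSet (R n) (volume.restrict (Icc (0:ℝ) 1)) := by
    intro n
    set Ψ : ℝ → (ℕ → Bool) := fun t k => decide (t ∈ D (n,k)) with hΨ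
    have hΨm : Measurable Ψ := by
      refine measurable_pi_lambda _ (fun k => ?_)
      refine measurable_to_countable' (fun b => ?_)
      cases b
      · have hf' : (fun t => decide (t ∈ D (n,k))) ⁻¹' {false} = (D (n,k))ᶜ := by
          ext t; simp
        rw [hf']
        exact (hD2 (n,k)).compl
      · have ht' : (fun t => decide (t ∈ D (n,k))) ⁻¹' {true} = D (n,k) := by
          ext t; simp
        rw [ht']
        exact hD2 (n,k)
    set ν : Measure (ℕ → Bool) := Measure.map Ψ (volume.restrict (Icc (0:ℝ) 1)) with hν
    haveI : IsFiniteMeasure ν := Measure.isFiniteMeasure_map _ _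
    haveI : PolishSpace Bool := inferInstance
    have hANM : NullMeasurableSet ((idealChar (I n))ᶜ) ν :=
      (analyticSet_nullMeasurableSet (hIa n) ν).compl
    obtain ⟨B, hBsub, hBm, hBae⟩ := hANM.exists_measurable_subset_ae_eq
    have hdiffnull : ν ((idealChar (I n))ᶜ \ B) = 0 := (ae_eq_set.1 hBae).2
    set E : Set (ℕ → Bool) := toMeasurable ν ((idealChar (I n))ᶜ \ B) with hE
    have hEm : MeasurableSet E := measurableSet_toMeasurable _ _
    have hEnull : ν E = 0 := by rw [hE, measure_toMeasurable]; exact hdiffnull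
    have hEsub : (idealChar (I n))ᶜ \ B ⊆ E := subset_toMeasurable _ _
    -- the candidate measurable version of R n
    set V : Set ℝ := Icc (0:ℝ) 1 ∩ Ψ ⁻¹' B with hV
    have hVm : MeasurableSet V := measurableSet_Icc.inter (hΨm hBm)
    -- the exceptional null set
    set U : Set ℝ := (Ψ ⁻¹' E) ∪ ⋃ k, (Sf (n,k) \ D (n,k)) with hU
    have hUnull : volume.restrict (Icc (0:ℝ) 1) U = 0 := by
      refine measure_union_null ?_ ?_
      · rw [← Measure.map_apply hΨm hEm]
        exact hEnull
      · refine measure_iUnion_null (fun k => ?_)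
        exact (ae_eq_set.1 (hD3 (n,k))).2
    refine NullMeasurableSet.congr hVm.nullMeasurableSet (ae_eq_of_diffs_null ?_ ?_ hUnull).symm
    · -- R n \ V ⊆ U
      rintro t ⟨⟨ht1, ht2⟩, htV⟩
      by_cases hk : ∃ k, t ∈ Sf (n,k) \ D (n,k)
      · right
        obtain ⟨k, hkk⟩ := hk
        exact Set.mem_iUnion.2 ⟨k, hkk⟩
      · push_neg at hk
        have hke : {k | t ∈ Sf (n,k)} = {k | t ∈ D (n,k)} := by
          ext k
          simp only [Set.mem_setOf_eq]
          exact ⟨fun h => by_contra (fun hc => hk k ⟨h, hc⟩), fun h => hD1 (n,k) h⟩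
        have hDset : {a : ℕ | Ψ t a = true} = {k | t ∈ D (n,k)} := by
          ext k; simp [hΨ]
        have hΨt : Ψ t ∉ idealChar (I n) := by
          intro hmem
          refine ht2 ?_
          have hmem' : {a : ℕ | Ψ t a = true} ∈ I n := hmem
          rw [hDset] at hmem'
          rw [hke]
          exact hmem'
        have hΨtB : Ψ t ∉ B := fun hB' => htV ⟨ht1, hB'⟩
        left
        exact hEsub ⟨hΨt, hΨtB⟩
    · -- V \ R n ⊆ U
      rintro t ⟨⟨ht1, htB⟩, htR⟩
      by_cases hk : ∃ k, t ∈ Sf (n,k) \ D (n,k)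
      · right
        obtain ⟨k, hkk⟩ := hk
        exact Set.mem_iUnion.2 ⟨k, hkk⟩
      · push_neg at hk
        have hke : {k | t ∈ Sf (n,k)} = {k | t ∈ D (n,k)} := by
          ext k
          simp only [Set.mem_setOf_eq]
          exact ⟨fun h => by_contra (fun hc => hk k ⟨h, hc⟩), fun h => hD1 (n,k) h⟩
        exfalso
        have hDset : {a : ℕ | Ψ t a = true} = {k | t ∈ D (n,k)} := by
          ext k; simp [hΨ]
        have hnotchar : Ψ t ∉ idealChar (I n) := hBsub htB
        have hsecIn : {k | t ∈ Sf (n,k)} ∈ I n := by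
          by_contra hcon
          exact htR ⟨ht1, hcon⟩
        refine hnotchar ?_
        show {a : ℕ | Ψ t a = true} ∈ I n
        rw [hDset, ← hke]
        exact hsecIn
  -- apply the Egorov property of J to the family R
  have hPJ : PIdeal J (η / 2^2) := IsEgorov.pIdeal (IsIdeal.basic hJ) hJE (by positivity)
  obtain ⟨M₀, hM₀1, hM₀2, hM₀3, hM₀hit⟩ := hPJ R hRsub hRnull hRsec
  set Bstar : Set ℕ := {n | (R n ∩ M₀).Nonempty} with hBstar
  -- row-wise Egorov
  have hrow : ∀ n : ℕ, ∃ Mn, Mn ⊆ Icc (0:ℝ) 1 ∧ NullMeasurableSet Mn volume ∧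
      volume (Icc (0:ℝ) 1 \ Mn) < ENNReal.ofReal (η / 2^(n+3)) ∧
      (n ∉ {m | ¬ IsEgorov (I m)} ∪ Bstar →
        {k | (Sf (n,k) ∩ M₀ ∩ Mn).Nonempty} ∈ I n) := by
    intro n
    by_cases hn : n ∈ {m | ¬ IsEgorov (I m)} ∪ Bstar
    · refine ⟨Icc (0:ℝ) 1, Subset.rfl, measurableSet_Icc.nullMeasurableSet, ?_, fun h => absurd hn h⟩
      rw [diff_self]
      simp only [measure_empty]
      exact ENNReal.ofReal_pos.2 (by positivity)
    · have hEg : IsEgorov (I n) := by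
        by_contra hcon
        exact hn (Or.inl hcon)
      have hPn : PIdeal (I n) (η / 2^(n+3)) := IsEgorov.pIdeal (IsIdeal.basic (hI n)) hEg (by positivity)
      have hnB : n ∉ Bstar := fun h => hn (Or.inr h)
      have hsecrow : ∀ t ∈ Icc (0:ℝ) 1, {k | t ∈ Sf (n,k) ∩ M₀} ∈ I n := by
        intro t ht
        by_cases htM : t ∈ M₀
        · have hRn : t ∉ R n := by
            intro hRt
            exact hnB ⟨t, hRt, htM⟩
          have hsec' : {k | t ∈ Sf (n,k)} ∈ I n := by
            by_contra hcon
            exact hRn ⟨ht, hcon⟩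
          refine (IsIdeal.basic (hI n)).2.1 _ _ ?_ hsec'
          intro k hk
          exact hk.1
        · have hemp : {k : ℕ | t ∈ Sf (n,k) ∩ M₀} = ∅ := by
            ext k
            simp only [Set.mem_setOf_eq, Set.mem_inter_iff, Set.mem_empty_iff_false, iff_false,
              not_and]
            exact fun _ => htM
          rw [hemp]
          exact (IsIdeal.basic (hI n)).1
      obtain ⟨Mn, hm1, hm2, hm3, hm4⟩ := hPn (fun k => Sf (n,k) ∩ M₀)
        (fun k t ht => hM₀1 ht.2)
        (fun k => (hnull (n,k)).inter (hM₀2.mono_ac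
          (Measure.absolutelyContinuous_of_le Measure.restrict_le_self)))
        hsecrow
      exact ⟨Mn, hm1, hm2, hm3, fun _ => hm4⟩
  choose Mrow hr1 hr2 hr3 hr4 using hrow
  -- the final set
  refine ⟨M₀ ∩ ⋂ n, Mrow n, (inter_subset_left).trans hM₀1,
    hM₀2.inter (NullMeasurableSet.iInter (fun n => hr2 n)), ?_, ?_⟩
  · have hsplit : Icc (0:ℝ) 1 \ (M₀ ∩ ⋂ n, Mrow n)
        ⊆ (Icc (0:ℝ) 1 \ M₀) ∪ ⋃ n, (Icc (0:ℝ) 1 \ Mrow n) := by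
      rintro t ⟨ht1, ht2⟩
      simp only [Set.mem_inter_iff, Set.mem_iInter, not_and, not_forall] at ht2
      by_cases htM : t ∈ M₀
      · obtain ⟨n, hn⟩ := ht2 htM
        right
        exact Set.mem_iUnion.2 ⟨n, ht1, hn⟩
      · left; exact ⟨ht1, htM⟩
    calc volume (Icc (0:ℝ) 1 \ (M₀ ∩ ⋂ n, Mrow n))
        ≤ volume ((Icc (0:ℝ) 1 \ M₀) ∪ ⋃ n, (Icc (0:ℝ) 1 \ Mrow n)) := measure_mono hsplit
      _ ≤ volume (Icc (0:ℝ) 1 \ M₀) + volume (⋃ n, (Icc (0:ℝ) 1 \ Mrow n)) :=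
          measure_union_le _ _
      _ ≤ volume (Icc (0:ℝ) 1 \ M₀) + ∑' n, volume (Icc (0:ℝ) 1 \ Mrow n) := by
          gcongr
          exact measure_iUnion_le _
      _ ≤ ENNReal.ofReal η * (2:ℝ≥0∞)⁻¹^2 + ∑' n : ℕ, ENNReal.ofReal η * (2:ℝ≥0∞)⁻¹^(n+3) := by
          gcongr with n
          · exact hM₀3.le.trans_eq (ofReal_div_pow hη 2)
          · exact (hr3 n).le.trans_eq (ofReal_div_pow hη (n+3))
      _ = ENNReal.ofReal η * ((2:ℝ≥0∞)⁻¹^2 + (∑' n : ℕ, (2:ℝ≥0∞)⁻¹^n) * (2:ℝ≥0∞)⁻¹^3) := by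
          rw [ENNReal.tsum_mul_left, ← mul_add]
          congr 2
          rw [← ENNReal.tsum_mul_right]
          congr 1
          ext n
          rw [pow_add]
      _ = ENNReal.ofReal η * 2⁻¹ := by
          congr 1
          rw [ENNReal.tsum_geometric, ENNReal.one_sub_inv_two, inv_inv]
          have h2 : (2:ℝ≥0∞) * 2⁻¹ = 1 := ENNReal.mul_inv_cancel (by norm_num) (by norm_num)
          calc (2:ℝ≥0∞)⁻¹^2 + 2 * 2⁻¹^3
              = 2⁻¹^2 + (2 * 2⁻¹) * 2⁻¹^2 := by ring
            _ = 2⁻¹^2 + 2⁻¹^2 := by rw [h2, one_mul]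
            _ = (2 * 2⁻¹) * 2⁻¹ := by ring
            _ = 2⁻¹ := by rw [h2, one_mul]
      _ = ENNReal.ofReal η / 2 := by rw [ENNReal.div_eq_inv_mul, mul_comm]
      _ < ENNReal.ofReal η := ENNReal.half_lt_self (by simpa using hη) ENNReal.ofReal_ne_top
  · rw [mem_idealSumOver]
    refine hJ.2.1 _ ({m | ¬ IsEgorov (I m)} ∪ Bstar) ?_ (hJ.1 _ _ hA ?_)
    · intro n hn
      simp only [Set.mem_setOf_eq] at hn
      by_contra hcon
      refine hn ((hI n).2.1 _ {k | (Sf (n,k) ∩ M₀ ∩ Mrow n).Nonempty} ?_ (hr4 n hcon))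
      rintro k ⟨t, htS, htM⟩
      exact ⟨t, ⟨⟨htS, htM.1⟩, Set.mem_iInter.1 htM.2 n⟩⟩
    · refine hJ.2.1 _ _ ?_ hM₀hit
      exact fun n hn => hn

end EgorovAux


/-- For an ideal `J` and analytic ideals `I_n` on `ω`: `∑^J_{n∈ω} I_n` is Egorov iff
`J` is Egorov and `{n : I_n is not Egorov} ∈ J`. -/
theorem idealSumOver_egorov_iff (J : Set (Set ℕ)) (I : ℕ → Set (Set ℕ))
    (hJ : IsIdeal J) (hI : ∀ n : ℕ, IsIdeal (I n))
    (hIa : ∀ n : ℕ, IsAnalyticIdeal (I n)) :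
    IsEgorov (idealSumOver J I) ↔ (IsEgorov J ∧ {n : ℕ | ¬ IsEgorov (I n)} ∈ J) := by
  constructor
  · intro hSum
    exact ⟨EgorovAux.isEgorov_J_of_sum hJ hI hSum, EgorovAux.mem_J_of_sum hJ hI hSum⟩
  · rintro ⟨hJE, hA⟩
    refine EgorovAux.pIdeal_isEgorov
      (EgorovAux.sum_basic (EgorovAux.IsIdeal.basic hJ)
        (fun n => EgorovAux.IsIdeal.basic (hI n))) ?_
    intro η hη
    exact EgorovAux.pIdeal_sum hJ hI hIa hJE hA hη
end

section
/- Let I be an ideal on ω and J be an analytic ideal on ω. Then the Fubini product I ⊗ J is Egorov if and only if both I and J are Egorov. -/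
open MeasureTheory Set

/-- The Fubini product `I ⊗ J` on `ω²`. -/
def fubiniProd (I J : Set (Set ℕ)) : Set (Set (ℕ × ℕ)) :=
  {M : Set (ℕ × ℕ) | {n : ℕ | {k : ℕ | (n, k) ∈ M} ∉ J} ∈ I}



noncomputable section

namespace EgorovAux

open Filter Topology

/-- Cylinder: bound the first `l.length` coordinates by the entries of `l`. -/
def cyl (l : List ℕ) : Set (ℕ → ℕ) := {x | ∀ i, i < l.length → x i ≤ l.getD i 0}

lemma cyl_nil : cyl ([] : List ℕ) = univ := by
  ext x; simp [cyl]

lemma cyl_append (l : List ℕ) (m : ℕ) :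
    cyl (l ++ [m]) = cyl l ∩ {x | x l.length ≤ m} := by
  ext x
  simp only [cyl, List.length_append, List.length_singleton, mem_inter_iff, mem_setOf_eq]
  constructor
  · intro h
    refine ⟨fun i hi => ?_, ?_⟩
    · have := h i (by omega)
      rwa [List.getD_append _ _ _ _ hi] at this
    · have := h l.length (by omega)
      rwa [List.getD_append_right _ _ _ _ le_rfl, Nat.sub_self] at this
  · rintro ⟨h1, h2⟩ i hi
    rcases Nat.lt_or_ge i l.length with h | h
    · rw [List.getD_append _ _ _ _ h]; exact h1 i h
    · have : i = l.length := by omega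
      subst this
      rwa [List.getD_append_right _ _ _ _ le_rfl, Nat.sub_self]

lemma cyl_union (l : List ℕ) : (⋃ m, cyl (l ++ [m])) = cyl l := by
  apply Subset.antisymm
  · exact iUnion_subset fun m => by rw [cyl_append]; exact inter_subset_left
  · intro x hx
    exact mem_iUnion.2 ⟨x l.length, by rw [cyl_append]; exact ⟨hx, by simp⟩⟩

lemma cyl_mono_append (l : List ℕ) {m m' : ℕ} (h : m ≤ m') :
    cyl (l ++ [m]) ⊆ cyl (l ++ [m']) := by
  rw [cyl_append, cyl_append]
  exact inter_subset_inter_right _ (fun x hx => le_trans hx h)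

/-- key step: choose a bound for the next coordinate losing at most ε' in measure. -/
lemma exists_step (μ : Measure ℝ) [IsFiniteMeasure μ] (f : (ℕ → ℕ) → ℝ)
    (l : List ℕ) (ε' : ENNReal) (hε' : ε' ≠ 0) :
    ∃ m : ℕ, μ (f '' cyl l) ≤ μ (f '' cyl (l ++ [m])) + ε' := by
  have hmono : Monotone (fun m => f '' cyl (l ++ [m])) := by
    intro a b hab
    exact image_mono (cyl_mono_append l hab)
  have hsup : μ (f '' cyl l) = ⨆ m, μ (f '' cyl (l ++ [m])) := by
    rw [← hmono.measure_iUnion, ← image_iUnion, cyl_union]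
  rcases eq_or_ne (μ (f '' cyl l)) 0 with h0 | h0
  · exact ⟨0, by rw [h0]; exact zero_le⟩
  have hfin : μ (f '' cyl l) ≠ ⊤ := measure_ne_top μ _
  have hlt : μ (f '' cyl l) - ε' < ⨆ m, μ (f '' cyl (l ++ [m])) := by
    rw [← hsup]
    exact ENNReal.sub_lt_self hfin h0 hε'
  rcases lt_iSup_iff.mp hlt with ⟨m, hm⟩
  exact ⟨m, tsub_le_iff_right.mp hm.le⟩

end EgorovAux

namespace EgorovAux

open Filter Topology

lemma sum_bound (ε : ENNReal) (n : ℕ) :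
    (∑ i ∈ Finset.range n, ε * 2⁻¹ ^ (i + 1)) ≤ ε := by
  calc (∑ i ∈ Finset.range n, ε * 2⁻¹ ^ (i + 1))
      ≤ ∑' i : ℕ, ε * 2⁻¹ ^ (i + 1) := ENNReal.sum_le_tsum _
    _ = ε * (2⁻¹ * ∑' i : ℕ, 2⁻¹ ^ i) := by
        rw [ENNReal.tsum_mul_left]
        congr 1
        rw [ENNReal.tsum_mul_left.symm]
        congr 1
        ext i
        rw [pow_succ, mul_comm]
    _ = ε := by
        rw [ENNReal.tsum_geometric]
        have h1 : (1:ENNReal) - 2⁻¹ = 2⁻¹ := by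
          rw [ENNReal.one_sub_inv_two]
        rw [h1, inv_inv, ENNReal.inv_mul_cancel (by norm_num) (by norm_num), mul_one]

lemma exists_closed_approx (μ : Measure ℝ) [IsFiniteMeasure μ] (f : (ℕ → ℕ) → ℝ)
    (hf : Continuous f) (ε : ENNReal) (hε : ε ≠ 0) :
    ∃ K : Set ℝ, K ⊆ range f ∧ IsClosed K ∧ μ (range f) ≤ μ K + ε := by
  have hstep' : ∀ l : List ℕ, ∃ m : ℕ,
      μ (f '' cyl l) ≤ μ (f '' cyl (l ++ [m])) + ε * 2⁻¹ ^ (l.length + 1) := by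
    intro l
    refine exists_step μ f l _ ?_
    exact mul_ne_zero hε (pow_ne_zero _ (ENNReal.inv_ne_zero.mpr (by norm_num)))
  choose step hstep using hstep'
  -- the recursively constructed sequence of lists
  let L : ℕ → List ℕ := fun n => n.rec [] (fun _ l => l ++ [step l])
  have hLsucc : ∀ n, L (n + 1) = L n ++ [step (L n)] := fun n => rfl
  have hlen : ∀ n, (L n).length = n := by
    intro n
    induction n with
    | zero => rfl
    | succ n ih => rw [hLsucc, List.length_append, ih]; rfl
  -- invariant
  have hinv : ∀ n, μ (range f) ≤ μ (f '' cyl (L n)) + ∑ i ∈ Finset.range n, ε * 2⁻¹ ^ (i + 1) := by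
    intro n
    induction n with
    | zero => simp [L, cyl_nil, image_univ]
    | succ n ih =>
      refine le_trans ih ?_
      rw [Finset.sum_range_succ, ← add_assoc]
      have hs := hstep (L n)
      rw [hlen n] at hs
      rw [← hLsucc] at hs
      calc μ (f '' cyl (L n)) + ∑ i ∈ Finset.range n, ε * 2⁻¹ ^ (i + 1)
          ≤ (μ (f '' cyl (L (n + 1))) + ε * 2⁻¹ ^ (n + 1)) +
            ∑ i ∈ Finset.range n, ε * 2⁻¹ ^ (i + 1) := add_le_add_left hs _
        _ = μ (f '' cyl (L (n + 1))) + ∑ i ∈ Finset.range n, ε * 2⁻¹ ^ (i + 1) +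
            ε * 2⁻¹ ^ (n + 1) := by ring
  have hbound : ∀ n, μ (range f) ≤ μ (f '' cyl (L n)) + ε := fun n =>
    le_trans (hinv n) (add_le_add_right (sum_bound ε n) _)
  -- the bound function
  set σ : ℕ → ℕ := fun i => (L (i + 1)).getD i 0 with hσ
  have hprefix : ∀ n i, i < n → (L n).getD i 0 = σ i := by
    intro n
    induction n with
    | zero => omega
    | succ n ih =>
      intro i hi
      rcases Nat.lt_or_ge i n with h | h
      · rw [hLsucc, List.getD_append _ _ _ _ (by rw [hlen]; exact h)]
        exact ih i h
      · have : i = n := by omega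
        subst this
        rfl
  set C : Set (ℕ → ℕ) := {x | ∀ i, x i ≤ σ i} with hC
  have hCcomp : IsCompact C := by
    have : C = Set.pi univ (fun i => Iic (σ i)) := by
      ext x; simp [hC, Set.mem_pi, Pi.le_def]
    rw [this]
    exact isCompact_univ_pi (fun i => (Set.finite_Iic _).isCompact)
  set D : ℕ → Set ℝ := fun n => closure (f '' cyl (L n)) with hD
  have hDanti : Antitone D := by
    refine antitone_nat_of_succ_le (fun n => ?_)
    refine closure_mono (image_mono ?_)
    rw [hLsucc, cyl_append]
    exact inter_subset_left
  refine ⟨⋂ n, D n, ?_, isClosed_iInter (fun n => isClosed_closure), ?_⟩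
  · -- the intersection is contained in the image of C, hence in range f
    intro y hy
    simp only [mem_iInter] at hy
    have hx : ∀ n : ℕ, ∃ u, u ∈ cyl (L n) ∧ dist y (f u) < 1 / (n + 1) := by
      intro n
      have := Metric.mem_closure_iff.mp (hy n) (1 / (n + 1)) (by positivity)
      rcases this with ⟨b, hb, hbd⟩
      rcases hb with ⟨u, hu, rfl⟩
      exact ⟨u, hu, hbd⟩
    choose x hx1 hx2 using hx
    set z : ℕ → (ℕ → ℕ) := fun n => fun i => if i < n then x n i else 0 with hz
    have hzC : ∀ n, z n ∈ C := by
      intro n i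
      simp only [hz]
      split_ifs with h
      · have := hx1 n i (by rw [hlen]; exact h)
        rwa [hprefix n i h] at this
      · exact Nat.zero_le _
    rcases hCcomp.tendsto_subseq hzC with ⟨a, haC, φ, hφ, hza⟩
    have hxa : Tendsto (fun n => x (φ n)) atTop (𝓝 a) := by
      rw [tendsto_pi_nhds]
      intro i
      have hzi : Tendsto (fun n => z (φ n) i) atTop (𝓝 (a i)) := by
        have := hza
        rw [tendsto_pi_nhds] at this
        exact this i
      have hev : ∀ᶠ n in atTop, x (φ n) i = z (φ n) i := by
        filter_upwards [eventually_ge_atTop (i + 1)] with n hn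
        have : i < φ n := lt_of_lt_of_le (by omega) (hφ.le_apply.trans le_rfl)
        simp [hz, this]
      exact hzi.congr' (by filter_upwards [hev] with n hn using hn.symm)
    have h1 : Tendsto (fun n => f (x (φ n))) atTop (𝓝 (f a)) :=
      (hf.tendsto a).comp hxa
    have h2 : Tendsto (fun n => f (x (φ n))) atTop (𝓝 y) := by
      rw [tendsto_iff_dist_tendsto_zero]
      refine squeeze_zero (fun n => dist_nonneg) (fun n => ?_)
        (tendsto_one_div_add_atTop_nhds_zero_nat)
      calc dist (f (x (φ n))) y = dist y (f (x (φ n))) := dist_comm _ _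
        _ ≤ 1 / (φ n + 1) := (hx2 (φ n)).le
        _ ≤ 1 / (n + 1) := by
            apply one_div_le_one_div_of_le (by positivity)
            have h : n ≤ φ n := hφ.le_apply
            have : (n : ℝ) ≤ (φ n : ℝ) := by exact_mod_cast h
            linarith
    exact ⟨a, tendsto_nhds_unique h1 h2⟩
  · -- measure bound
    have hDmeas : ∀ n, NullMeasurableSet (D n) μ :=
      fun n => isClosed_closure.measurableSet.nullMeasurableSet
    have hiInter : μ (⋂ n, D n) = ⨅ n, μ (D n) := by
      refine Directed.measure_iInter hDmeas ?_ ⟨0, measure_ne_top μ _⟩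
      exact hDanti.directed_ge
    rw [hiInter]
    have : (⨅ n, μ (D n)) + ε = ⨅ n, (μ (D n) + ε) := by
      rw [ENNReal.iInf_add]
    rw [this]
    refine le_iInf (fun n => ?_)
    exact le_trans (hbound n) (add_le_add_left (measure_mono subset_closure) _)

theorem analyticSet_nullMeasurableSet_s18 {s : Set ℝ} (hs : MeasureTheory.AnalyticSet s)
    (μ : Measure ℝ) [IsFiniteMeasure μ] : NullMeasurableSet s μ := by
  rw [MeasureTheory.AnalyticSet] at hs
  rcases hs with rfl | ⟨f, hf, rfl⟩
  · exact MeasurableSet.empty.nullMeasurableSet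
  have hK : ∀ j : ℕ, ∃ K : Set ℝ, K ⊆ range f ∧ IsClosed K ∧
      μ (range f) ≤ μ K + ((j : ENNReal) + 1)⁻¹ := by
    intro j
    exact exists_closed_approx μ f hf _ (by simp)
  choose K hK1 hK2 hK3 using hK
  set B : Set ℝ := ⋃ j, K j with hB
  have hBmeas : MeasurableSet B := MeasurableSet.iUnion (fun j => (hK2 j).measurableSet)
  have hBsub : B ⊆ range f := iUnion_subset hK1
  have hle : μ (range f) ≤ μ B := by
    refine ENNReal.le_of_forall_pos_le_add (fun δ hδ _ => ?_)
    obtain ⟨n, hn⟩ := ENNReal.exists_inv_nat_lt (a := (δ : ENNReal))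
      (by simpa using hδ.ne')
    refine le_trans (hK3 n) (add_le_add (measure_mono (subset_iUnion K n)) ?_)
    refine le_trans ?_ hn.le
    refine ENNReal.inv_le_inv.mpr ?_
    simp
  have hnull : μ (range f \ B) = 0 := by
    have hsub2 : range f \ B ⊆ toMeasurable μ (range f) \ B :=
      diff_subset_diff_left (subset_toMeasurable _ _)
    refine measure_mono_null hsub2 ?_
    rw [measure_diff (hBsub.trans (subset_toMeasurable _ _)) hBmeas.nullMeasurableSet
      (measure_ne_top μ _), measure_toMeasurable]
    exact tsub_eq_zero_iff_le.mpr hle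
  have : range f = B ∪ (range f \ B) := by
    rw [union_diff_cancel' (le_refl B) hBsub]
  rw [this]
  exact hBmeas.nullMeasurableSet.union (NullMeasurableSet.of_null hnull)

end EgorovAux


namespace EgorovAux

open Filter Topology

open Classical in
/-- Preimage of an analytic set in `ℕ → Bool` under an a.e.-measurable "characteristic
function" map is null-measurable (for a finite measure). -/
lemma nullMeasurable_mem_analytic (μ : Measure ℝ) [IsFiniteMeasure μ]
    {A : Set (ℕ → Bool)} (hA : MeasureTheory.AnalyticSet A)
    (S : ℕ → Set ℝ) (hS : ∀ k, NullMeasurableSet (S k) μ) :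
    NullMeasurableSet {t : ℝ | (fun k => decide (t ∈ S k)) ∈ A} μ := by
  classical
  set T : ℕ → Set ℝ := fun k => toMeasurable μ (S k) with hTdef
  have hTmeas : ∀ k, MeasurableSet (T k) := fun k => measurableSet_toMeasurable _ _
  have hae : ∀ k, T k =ᵐ[μ] S k := fun k => (hS k).toMeasurable_ae_eq
  have haeG : ∀ᵐ t ∂μ, ∀ k, (t ∈ T k ↔ t ∈ S k) := by
    rw [MeasureTheory.ae_all_iff]
    intro k
    exact eventuallyEq_set.mp (hae k)
  set Φ : ℝ → (ℕ → Bool) := fun t k => decide (t ∈ T k) with hΦdef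
  have hΦ : Measurable Φ := by
    refine measurable_pi_lambda _ (fun k => ?_)
    have : (fun t => decide (t ∈ T k)) = fun t => if t ∈ T k then true else false := by
      ext t; by_cases h : t ∈ T k <;> simp [h]
    rw [this]
    exact Measurable.ite (hTmeas k) measurable_const measurable_const
  have hW : NullMeasurableSet (Φ ⁻¹' A) μ := by
    rw [MeasureTheory.AnalyticSet] at hA
    rcases hA with h | ⟨γ, hγ, rfl⟩
    · rw [h, preimage_empty]
      exact MeasurableSet.empty.nullMeasurableSet
    have himg : Φ ⁻¹' (range γ) = Prod.fst '' {p : ℝ × (ℕ → ℕ) | Φ p.1 = γ p.2} := by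
      ext t
      simp only [mem_preimage, mem_range, mem_image, mem_setOf_eq, Prod.exists]
      constructor
      · rintro ⟨z, hz⟩; exact ⟨t, z, hz.symm, rfl⟩
      · rintro ⟨t', z, hz, rfl⟩; exact ⟨z, hz.symm⟩
    rw [himg]
    have hD : MeasurableSet {p : ℝ × (ℕ → ℕ) | Φ p.1 = γ p.2} :=
      ((hΦ.comp measurable_fst).prodMk (hγ.measurable.comp measurable_snd))
        (isClosed_diagonal.measurableSet)
    exact analyticSet_nullMeasurableSet_s18
      (hD.analyticSet.image_of_continuous continuous_fst) μ
  have haeEq : {t : ℝ | (fun k => decide (t ∈ S k)) ∈ A} =ᵐ[μ] Φ ⁻¹' A := by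
    rw [eventuallyEq_set]
    filter_upwards [haeG] with t ht
    have : (fun k => decide (t ∈ S k)) = Φ t := by
      ext k
      exact decide_eq_decide.mpr (ht k).symm
    rw [this]
    exact Iff.rfl
  exact hW.congr haeEq.symm

end EgorovAux


open Filter Topology in
/-- For an ideal `I` and an analytic ideal `J` on `ω`: `I ⊗ J` is Egorov iff
both `I` and `J` are Egorov. -/
theorem fubiniProd_egorov_iff (I J : Set (Set ℕ)) (hI : IsIdeal I) (hJ : IsIdeal J)
    (hJa : IsAnalyticIdeal J) :
    IsEgorov (fubiniProd I J) ↔ (IsEgorov I ∧ IsEgorov J) := by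
  classical
  obtain ⟨hIun, hIdown, hIfin, hIuniv⟩ := hI
  obtain ⟨hJun, hJdown, hJfin, hJuniv⟩ := hJ
  constructor
  · intro hE
    constructor
    · -- `I` is Egorov
      intro f g hfm hgm hconv η hη
      have hconv' : IConvPtwise (fubiniProd I J) (fun p : ℕ × ℕ => f p.1) g := by
        intro t ht ε hε
        have hA : {a : ℕ | ε ≤ |f a t - g t|} ∈ I := hconv t ht ε hε
        have : {n : ℕ | {k : ℕ | (n, k) ∈ {p : ℕ × ℕ | ε ≤ |f p.1 t - g t|}} ∉ J}
            = {a : ℕ | ε ≤ |f a t - g t|} := by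
          ext n
          simp only [mem_setOf_eq]
          by_cases hn : ε ≤ |f n t - g t|
          · simp only [hn, iff_true]
            rw [setOf_true]
            exact hJuniv
          · simp only [hn, iff_false, not_not]
            rw [setOf_false]
            exact hJfin _ finite_empty
        show _ ∈ fubiniProd I J
        rw [fubiniProd, mem_setOf_eq, this]
        exact hA
      obtain ⟨M, hM1, hM2, hM3, hM4⟩ :=
        hE (fun p : ℕ × ℕ => f p.1) g (fun p => hfm p.1) hgm hconv' η hη
      refine ⟨M, hM1, hM2, hM3, ?_⟩
      intro ε hε
      have := hM4 ε hε
      simp only [fubiniProd, mem_setOf_eq] at this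
      have heq : {n : ℕ | {k : ℕ | ∃ t ∈ M, ε ≤ |f n t - g t|} ∉ J}
          = {a : ℕ | ∃ t ∈ M, ε ≤ |f a t - g t|} := by
        ext n
        simp only [mem_setOf_eq]
        by_cases hn : ∃ t ∈ M, ε ≤ |f n t - g t|
        · simp only [hn, iff_true, setOf_true]
          exact hJuniv
        · simp only [hn, iff_false, not_not, setOf_false]
          exact hJfin _ finite_empty
      rwa [heq] at this
    · -- `J` is Egorov
      intro f g hfm hgm hconv η hη
      have hconv' : IConvPtwise (fubiniProd I J) (fun p : ℕ × ℕ => f p.2) g := by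
        intro t ht ε hε
        have hA : {a : ℕ | ε ≤ |f a t - g t|} ∈ J := hconv t ht ε hε
        show _ ∈ fubiniProd I J
        simp only [fubiniProd, mem_setOf_eq]
        have : {n : ℕ | {k : ℕ | ε ≤ |f k t - g t|} ∉ J}
            = (∅ : Set ℕ) := by
          ext n
          simp only [mem_setOf_eq, mem_empty_iff_false, iff_false, not_not]
          exact hA
        rw [this]
        exact hIfin _ finite_empty
      obtain ⟨M, hM1, hM2, hM3, hM4⟩ :=
        hE (fun p : ℕ × ℕ => f p.2) g (fun p => hfm p.2) hgm hconv' η hη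
      refine ⟨M, hM1, hM2, hM3, ?_⟩
      intro ε hε
      have hU := hM4 ε hε
      simp only [fubiniProd, mem_setOf_eq] at hU
      by_contra hB
      have : {n : ℕ | {k : ℕ | ∃ t ∈ M, ε ≤ |f k t - g t|} ∉ J}
          = (univ : Set ℕ) := by
        ext n
        simp only [mem_setOf_eq, mem_univ, iff_true]
        exact hB
      rw [this] at hU
      exact hIuniv hU
  · -- the hard direction
    rintro ⟨hEI, hEJ⟩
    intro f g hfm hgm hconv η hη
    set μ : Measure ℝ := volume.restrict (Icc (0:ℝ) 1) with hμdef
    haveI : IsFiniteMeasure μ := by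
      constructor
      rw [hμdef, Measure.restrict_apply_univ]
      simp [Real.volume_Icc]
    obtain ⟨e, he⟩ : ∃ e : ℕ → ℚ, Function.Surjective e :=
      ⟨fun n => (Denumerable.eqv ℚ).symm n, (Denumerable.eqv ℚ).symm.surjective⟩
    -- the row-deviation functions w n
    set T : ℕ → ℕ → Set ℝ :=
      fun n j => {t : ℝ | {k : ℕ | ((e j : ℝ)) ≤ |f (n, k) t - g t|} ∈ J} with hTdef
    have hTmeas : ∀ n j, NullMeasurableSet (T n j) μ := by
      intro n j
      have hS : ∀ k : ℕ, NullMeasurableSet {t : ℝ | ((e j : ℝ)) ≤ |f (n, k) t - g t|} μ := by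
        intro k
        exact nullMeasurableSet_le aemeasurable_const (continuous_abs.measurable.comp_aemeasurable ((hfm (n, k)).sub hgm))
      have := EgorovAux.nullMeasurable_mem_analytic μ hJa
        (fun k => {t : ℝ | ((e j : ℝ)) ≤ |f (n, k) t - g t|}) hS
      have heq : {t : ℝ | (fun k => decide (t ∈ {t : ℝ | ((e j : ℝ)) ≤ |f (n, k) t - g t|}))
          ∈ idealChar J} = T n j := by
        ext t
        simp only [hTdef, mem_setOf_eq, idealChar]
        constructor
        · intro h
          convert h using 2
          ext k
          simp
        · intro h
          convert h using 2
          ext k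
          simp
      rwa [heq] at this
    set d : ℕ → ℕ → ℝ → ℝ :=
      fun n j t => if 0 < e j ∧ t ∈ T n j then ((e j : ℝ)) else 2 with hddef
    have hdnonneg : ∀ n j t, 0 ≤ d n j t := by
      intro n j t
      simp only [hddef]
      split_ifs with h1
      · exact_mod_cast h1.1.le
      · norm_num
    have hdbdd : ∀ n t, BddBelow (range fun j => d n j t) := by
      intro n t
      exact ⟨0, by rintro x ⟨j, rfl⟩; exact hdnonneg n j t⟩
    set w : ℕ → ℝ → ℝ := fun n t => min 2 (⨅ j, d n j t) with hwdef
    have hwle2 : ∀ n t, w n t ≤ 2 := fun n t => min_le_left _ _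
    have hwnonneg : ∀ n t, 0 ≤ w n t := by
      intro n t
      exact le_min (by norm_num) (le_ciInf (fun j => hdnonneg n j t))
    -- w n t is at most any admissible rational
    have hwle : ∀ n t j, 0 < e j → t ∈ T n j → w n t ≤ ((e j : ℝ)) := by
      intro n t j hj ht
      have h1 : d n j t = ((e j : ℝ)) := by
        simp only [hddef]
        rw [if_pos ⟨hj, ht⟩]
      calc w n t ≤ ⨅ j, d n j t := min_le_right _ _
        _ ≤ d n j t := ciInf_le (hdbdd n t) j
        _ = _ := h1
    -- key property: there is an admissible rational below w n t + δ
    have hwkey : ∀ n t δ, 0 < δ → w n t + δ ≤ 2 →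
        ∃ j, 0 < e j ∧ t ∈ T n j ∧ ((e j : ℝ)) < w n t + δ := by
      intro n t δ hδ hle
      have h2 : (⨅ j, d n j t) < w n t + δ := by
        rcases le_or_gt 2 (⨅ j, d n j t) with hc | hc
        · exfalso
          have hw2 : w n t = 2 := by
            rw [hwdef]
            exact min_eq_left hc
          linarith
        · have hw : w n t = ⨅ j, d n j t := by
            rw [hwdef]
            exact min_eq_right hc.le
          linarith
      obtain ⟨j, hj⟩ := exists_lt_of_ciInf_lt h2
      by_cases hcond : 0 < e j ∧ t ∈ T n j
      · refine ⟨j, hcond.1, hcond.2, ?_⟩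
        simp only [hddef] at hj
        rwa [if_pos hcond] at hj
      · exfalso
        simp only [hddef] at hj
        rw [if_neg hcond] at hj
        linarith
    -- measurability of w n
    have hwmeas : ∀ n, AEMeasurable (w n) μ := by
      intro n
      have : AEMeasurable (fun t => ⨅ j, d n j t) μ := by
        refine AEMeasurable.iInf (fun j => ?_)
        by_cases h1 : 0 < e j
        · have heq : d n j
              = fun t => if t ∈ T n j then ((e j : ℝ)) else 2 := by
            ext t
            simp only [hddef]
            by_cases h2 : t ∈ T n j
            · rw [if_pos ⟨h1, h2⟩, if_pos h2]
            · rw [if_neg (fun hh => h2 hh.2), if_neg h2]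
          rw [heq]
          have haeT : toMeasurable μ (T n j) =ᵐ[μ] T n j := (hTmeas n j).toMeasurable_ae_eq
          refine ⟨fun t => if t ∈ toMeasurable μ (T n j) then ((e j : ℝ)) else 2,
            Measurable.ite (measurableSet_toMeasurable _ _) measurable_const
              measurable_const, ?_⟩
          filter_upwards [Filter.eventuallyEq_set.mp haeT] with t ht
          by_cases h : t ∈ T n j
          · rw [if_pos h, if_pos (ht.mpr h)]
          · rw [if_neg h, if_neg (fun hh => h (ht.mp hh))]
        · have heq : d n j = fun _ => (2:ℝ) := by
            ext t
            simp only [hddef]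
            rw [if_neg (fun hh => h1 hh.1)]
          rw [heq]
          exact aemeasurable_const
      exact AEMeasurable.min aemeasurable_const this
    -- w is I-pointwise convergent to 0
    have hwconv : IConvPtwise I w (fun _ => 0) := by
      intro t ht ε hε
      obtain ⟨q, hq0, hqε⟩ := exists_rat_btwn hε
      obtain ⟨j, rfl⟩ := he q
      have hfub := hconv t ht ((e j : ℝ)) hq0
      simp only [fubiniProd, mem_setOf_eq] at hfub
      refine hIdown _ _ ?_ hfub
      intro n hn
      simp only [mem_setOf_eq] at hn ⊢
      intro hmem
      have htT : t ∈ T n j := by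
        rw [hTdef]
        simpa using hmem
      have hq0' : (0:ℚ) < e j := by exact_mod_cast hq0
      have := hwle n t j hq0' htT
      rw [sub_zero, abs_of_nonneg (hwnonneg n t)] at hn
      linarith
    obtain ⟨M₀, hM₀sub, hM₀meas, hM₀vol, hM₀unif⟩ :=
      hEI w (fun _ => 0) hwmeas aemeasurable_const hwconv (η/4) (by linarith)
    -- the rows h n
    set h : ℕ → ℕ → ℝ → ℝ :=
      fun n k t => max (min |f (n, k) t - g t| 2 - w n t) 0 with hhdef
    have hhnonneg : ∀ n k t, 0 ≤ h n k t := fun n k t => le_max_right _ _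
    have hhmeas : ∀ n k, AEMeasurable (h n k) μ := by
      intro n k
      exact (((continuous_abs.measurable.comp_aemeasurable ((hfm (n, k)).sub hgm)).min aemeasurable_const).sub (hwmeas n)).max
        aemeasurable_const
    have hhconv : ∀ n, IConvPtwise J (h n) (fun _ => 0) := by
      intro n t ht δ hδ
      by_cases hc : w n t + δ ≤ 2
      · obtain ⟨j, hj0, hjT, hjlt⟩ := hwkey n t δ hδ hc
        have hsub : {k : ℕ | δ ≤ |h n k t - 0|} ⊆ {k : ℕ | ((e j : ℝ)) ≤ |f (n, k) t - g t|} := by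
          intro k hk
          simp only [mem_setOf_eq, sub_zero, abs_of_nonneg (hhnonneg n k t)] at hk
          simp only [mem_setOf_eq]
          have hmin : min |f (n, k) t - g t| 2 ≥ w n t + δ := by
            by_contra hcon
            push_neg at hcon
            have : h n k t < δ := by
              rw [hhdef]
              simp only
              rw [max_lt_iff]
              constructor <;> [linarith; linarith]
            linarith
          have h1 : ((e j : ℝ)) < min |f (n, k) t - g t| 2 := lt_of_lt_of_le hjlt hmin
          calc ((e j : ℝ)) ≤ min |f (n, k) t - g t| 2 := h1.le
            _ ≤ |f (n, k) t - g t| := min_le_left _ _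
        refine hJdown _ _ hsub ?_
        rw [hTdef] at hjT
        exact hjT
      · push_neg at hc
        have : {k : ℕ | δ ≤ |h n k t - 0|} = (∅ : Set ℕ) := by
          ext k
          simp only [mem_setOf_eq, mem_empty_iff_false, iff_false, not_le, sub_zero,
            abs_of_nonneg (hhnonneg n k t)]
          have hle : h n k t ≤ max (2 - w n t) 0 := by
            rw [hhdef]
            simp only
            refine max_le_max ?_ le_rfl
            have : min |f (n, k) t - g t| 2 ≤ 2 := min_le_right _ _
            linarith
          rcases le_or_gt (2 - w n t) 0 with hh | hh
          · rw [max_eq_right hh] at hle; linarith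
          · rw [max_eq_left hh.le] at hle; linarith
        rw [this]
        exact hJfin _ finite_empty
    have hrow : ∀ n : ℕ, ∃ N : Set ℝ, N ⊆ Icc (0:ℝ) 1 ∧ NullMeasurableSet N volume ∧
        volume (Icc (0:ℝ) 1 \ N) < ENNReal.ofReal (η / 2 ^ (n + 3)) ∧
        IConvUnif J (h n) (fun _ => 0) N := by
      intro n
      exact hEJ (h n) (fun _ => 0) (hhmeas n) aemeasurable_const (hhconv n)
        (η / 2 ^ (n + 3)) (by positivity)
    choose N hN1 hN2 hN3 hN4 using hrow
    refine ⟨M₀ ∩ ⋂ n, N n, ?_, ?_, ?_, ?_⟩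
    · exact inter_subset_left.trans hM₀sub
    · exact hM₀meas.inter (NullMeasurableSet.iInter (fun n => hN2 n))
    · -- measure estimate
      have hsub : Icc (0:ℝ) 1 \ (M₀ ∩ ⋂ n, N n) ⊆
          (Icc (0:ℝ) 1 \ M₀) ∪ ⋃ n, (Icc (0:ℝ) 1 \ N n) := by
        rintro t ⟨ht1, ht2⟩
        by_cases hM : t ∈ M₀
        · right
          simp only [mem_iUnion, mem_diff]
          have : ¬ t ∈ ⋂ n, N n := fun hh => ht2 ⟨hM, hh⟩
          rw [mem_iInter] at this
          push_neg at this
          obtain ⟨n, hn⟩ := this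
          exact ⟨n, ht1, hn⟩
        · exact Or.inl ⟨ht1, hM⟩
      have hbound : volume (Icc (0:ℝ) 1 \ (M₀ ∩ ⋂ n, N n)) ≤
          ENNReal.ofReal (η/4) + ∑' n : ℕ, ENNReal.ofReal (η / 2 ^ (n + 3)) := by
        calc volume (Icc (0:ℝ) 1 \ (M₀ ∩ ⋂ n, N n))
            ≤ volume ((Icc (0:ℝ) 1 \ M₀) ∪ ⋃ n, (Icc (0:ℝ) 1 \ N n)) := measure_mono hsub
          _ ≤ volume (Icc (0:ℝ) 1 \ M₀) + volume (⋃ n, (Icc (0:ℝ) 1 \ N n)) := measure_union_le _ _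
          _ ≤ volume (Icc (0:ℝ) 1 \ M₀) + ∑' n : ℕ, volume (Icc (0:ℝ) 1 \ N n) := by
              exact add_le_add_right (measure_iUnion_le _) _
          _ ≤ ENNReal.ofReal (η/4) + ∑' n : ℕ, ENNReal.ofReal (η / 2 ^ (n + 3)) := by
              exact add_le_add hM₀vol.le (ENNReal.tsum_le_tsum (fun n => (hN3 n).le))
      have htsum : (∑' n : ℕ, ENNReal.ofReal (η / 2 ^ (n + 3))) = ENNReal.ofReal (η/4) := by
        have heach : ∀ n : ℕ, ENNReal.ofReal (η / 2 ^ (n + 3))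
            = ENNReal.ofReal (η/8) * (2:ENNReal)⁻¹ ^ n := by
          intro n
          have h1 : η / 2 ^ (n + 3) = (η/8) * (1/2) ^ n := by
            rw [pow_add, div_pow, one_pow]
            rw [div_mul_eq_div_div]
            rw [div_div]
            rw [mul_comm ((2:ℝ)^n) (2^3)]
            norm_num
            rw [div_mul_eq_div_div, div_eq_mul_inv (η/8)]
          rw [h1, ENNReal.ofReal_mul (by linarith), ENNReal.ofReal_pow (by norm_num)]
          have h12 : ENNReal.ofReal ((1:ℝ)/2) = 2⁻¹ := by
            rw [ENNReal.ofReal_div_of_pos (by norm_num), ENNReal.ofReal_one,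
              ENNReal.ofReal_ofNat, one_div]
          rw [h12]
        rw [tsum_congr heach, ENNReal.tsum_mul_left, ENNReal.tsum_geometric]
        have h2 : ((1:ENNReal) - 2⁻¹)⁻¹ = 2 := by
          rw [ENNReal.one_sub_inv_two, inv_inv]
        rw [h2]
        rw [show (2:ENNReal) = ENNReal.ofReal 2 by simp]
        rw [← ENNReal.ofReal_mul (by linarith)]
        congr 1
        ring
      calc volume (Icc (0:ℝ) 1 \ (M₀ ∩ ⋂ n, N n))
          ≤ ENNReal.ofReal (η/4) + ENNReal.ofReal (η/4) := by rw [htsum] at hbound; exact hbound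
        _ = ENNReal.ofReal (η/2) := by
            rw [← ENNReal.ofReal_add (by linarith) (by linarith)]
            congr 1
            ring
        _ < ENNReal.ofReal η := by
            rw [ENNReal.ofReal_lt_ofReal_iff hη]
            linarith
    · -- uniform convergence
      intro ε hε
      set ε₁ := min ε 1 with hε₁def
      have hε₁pos : 0 < ε₁ := lt_min hε one_pos
      have hε₁le : ε₁ ≤ ε := min_le_left _ _
      have hε₁le1 : ε₁ ≤ 1 := min_le_right _ _
      have hB := hM₀unif (ε₁/2) (by linarith)
      simp only [fubiniProd, mem_setOf_eq]
      refine hIdown _ _ ?_ hB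
      intro n hn
      simp only [mem_setOf_eq] at hn ⊢
      by_contra hnB
      apply hn
      -- show the section is in J
      have hC := hN4 n (ε₁/2) (by linarith)
      refine hJdown _ _ ?_ hC
      intro k hk
      simp only [mem_setOf_eq] at hk ⊢
      obtain ⟨t, htM, htf⟩ := hk
      have htM₀ : t ∈ M₀ := htM.1
      have htN : t ∈ N n := by
        have := htM.2
        rw [mem_iInter] at this
        exact this n
      refine ⟨t, htN, ?_⟩
      have hwt : w n t < ε₁/2 := by
        by_contra hcon
        push_neg at hcon
        exact hnB ⟨t, htM₀, by rw [sub_zero, abs_of_nonneg (hwnonneg n t)]; exact hcon⟩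
      have hmin : ε₁ ≤ min |f (n, k) t - g t| 2 := by
        refine le_min ?_ ?_
        · exact le_trans hε₁le htf
        · linarith
      have : ε₁/2 ≤ h n k t := by
        rw [hhdef]
        simp only
        refine le_trans ?_ (le_max_left _ _)
        linarith
      rw [sub_zero, abs_of_nonneg (hhnonneg n k t)]
      exact this
end
end
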